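/- arXiv:1606.02386 — 5 statements merged into one kernel-verified Lean document; each statement's English description precedes it below -/
import Mathlib

section
/- For 0 ≤ s ≤ t < 1, conditionally on F_s, the increment a_t - a_s of the uniform counting process has a Binomial distribution with parameters n₀ - a_s and (t-s)/(1-s). -/
open MeasureTheory Set ProbabilityTheory

private lemma measurable_card_filter_aux {ι : Type*} [Fintype ι] (c : ℝ) :
    Measurable fun x : ι → ℝ => (Finset.univ.filter fun i => x i ≤ c).card := by
  simp only [Finset.card_filter]
  exact Finset.measurable_sum _ fun i _ =>
    Measurable.ite (measurableSet_le (measurable_pi_apply i) measurable_const)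
      measurable_const measurable_const

private lemma card_filter_attach_aux {α : Type*} (S : Finset α) (p : α → Prop) [DecidablePred p] :
    ((Finset.univ : Finset {x // x ∈ S}).filter fun i => p i.1).card = (S.filter p).card := by
  rw [Finset.card_filter, Finset.card_filter, Finset.univ_eq_attach,
    Finset.sum_attach S (fun i => if p i then 1 else 0)]

/-- For `0 ≤ s ≤ t < 1`, conditionally on `F_s = σ(a_u, u ≤ s)`, the
increment `a_t - a_s` of the uniform counting process has a Binomial distribution with
parameters `n₀ - a_s` and `(t-s)/(1-s)`: for every `k`, the conditional probability of
`{a_t - a_s = k}` given `F_s` equals `C(n₀ - a_s, k) p^k (1-p)^{n₀ - a_s - k}` with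
`p = (t-s)/(1-s)`. -/
theorem increment_cond_binomial
    {Ω : Type*} [m0 : MeasurableSpace Ω] (μ : Measure Ω) [IsProbabilityMeasure μ]
    (n₀ : ℕ) (U : Fin n₀ → Ω → ℝ)
    (hmeas : ∀ i, Measurable (U i))
    (hiid : iIndepFun U μ)
    (hunif : ∀ i, Measure.map (U i) μ = volume.restrict (Set.Icc (0:ℝ) 1))
    (a : ℝ → Ω → ℕ)
    (ha : ∀ t ω, a t ω = (Finset.univ.filter (fun i => U i ω ≤ t)).card)
    (F : ℝ → MeasurableSpace Ω)
    (hF : ∀ s, F s = ⨆ u ∈ Set.Iic s, MeasurableSpace.comap (a u) inferInstance)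
    (hFle : ∀ s, F s ≤ m0)
    (s t : ℝ) (hs : 0 ≤ s) (hst : s ≤ t) (ht : t < 1) (k : ℕ) :
    μ[(fun ω => if a t ω - a s ω = k then (1:ℝ) else 0) | F s]
      =ᵐ[μ] fun ω =>
        ((n₀ - a s ω).choose k : ℝ) * ((t - s) / (1 - s)) ^ k
          * (1 - (t - s) / (1 - s)) ^ (n₀ - a s ω - k) := by
  set p : ℝ := (t - s) / (1 - s) with hp
  have hs1 : (0:ℝ) < 1 - s := by linarith
  have hp0 : 0 ≤ p := div_nonneg (by linarith) hs1.le
  have hp1 : p ≤ 1 := by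
    rw [hp, div_le_one hs1]; linarith
  have hpts : p * (1 - s) = t - s := div_mul_cancel₀ _ hs1.ne'
  have hq1t : (1 - p) * (1 - s) = 1 - t := by rw [sub_mul, one_mul, hpts]; ring
  -- measurability of a u
  have hvec : Measurable (fun ω i => U i ω) := measurable_pi_lambda _ hmeas
  have haMeas : ∀ u, Measurable (a u) := by
    intro u
    have h1 : a u = (fun x : Fin n₀ → ℝ => (Finset.univ.filter fun i => x i ≤ u).card) ∘
        (fun ω i => U i ω) := by funext ω; simp [ha, Function.comp]
    rw [h1]; exact (measurable_card_filter_aux u).comp hvec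
  -- truncated vector V
  set V : Ω → Fin n₀ → ℝ := fun ω i => if U i ω ≤ s then U i ω else 2 with hV
  have hVmeas : Measurable V := measurable_pi_lambda _ fun i =>
    Measurable.ite (measurableSet_le (hmeas i) measurable_const) (hmeas i) measurable_const
  have hFV : F s ≤ MeasurableSpace.comap V inferInstance := by
    rw [hF]
    refine iSup_le fun u => iSup_le fun hu => ?_
    rw [← measurable_iff_comap_le]
    have h1 : a u = (fun x : Fin n₀ → ℝ => (Finset.univ.filter fun i => x i ≤ u).card) ∘ V := by
      funext ω
      rw [ha]
      simp only [Function.comp]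
      congr 1
      apply Finset.filter_congr
      intro i _
      have hus : u ≤ s := hu
      simp only [hV, eq_iff_iff]
      constructor
      · intro h; rw [if_pos (h.trans hus)]; exact h
      · intro h
        by_cases h2 : U i ω ≤ s
        · rwa [if_pos h2] at h
        · rw [if_neg h2] at h; linarith [hst, ht]
    rw [h1]
    exact (measurable_card_filter_aux u).comp (measurable_iff_comap_le.mpr le_rfl)
  -- event E
  set E : Set Ω := {ω | a t ω - a s ω = k} with hE
  have hEmeas : MeasurableSet E :=
    ((haMeas t).sub (haMeas s)) (measurableSet_singleton k)
  have hfeq : (fun ω => if a t ω - a s ω = k then (1:ℝ) else 0) = E.indicator (fun _ => 1) := by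
    funext ω; simp [Set.indicator_apply, hE, Set.mem_setOf_eq]
  have hfInt : Integrable (fun ω => if a t ω - a s ω = k then (1:ℝ) else 0) μ := by
    rw [hfeq]; exact (integrable_const 1).indicator hEmeas
  -- the candidate g
  set φ : ℕ → ℝ := fun m => ((n₀ - m).choose k : ℝ) * p ^ k * (1 - p) ^ (n₀ - m - k) with hφ
  have hasFs : Measurable[F s] (a s) := by
    rw [measurable_iff_comap_le, hF]
    exact le_iSup₂ (f := fun u (_ : u ∈ Set.Iic s) => MeasurableSpace.comap (a u) inferInstance)
      s (Set.mem_Iic.mpr le_rfl)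
  have hgFs : Measurable[F s] (fun ω => φ (a s ω)) :=
    Measurable.comp (measurable_from_nat (f := φ)) hasFs
  have hφbound : ∀ m, ‖φ m‖ ≤ 2 ^ n₀ := by
    intro m
    have h0 : 0 ≤ φ m := by
      apply mul_nonneg (mul_nonneg (Nat.cast_nonneg _) (pow_nonneg hp0 _))
        (pow_nonneg (by linarith) _)
    rw [Real.norm_eq_abs, abs_of_nonneg h0]
    calc φ m ≤ ((n₀ - m).choose k : ℝ) * 1 * 1 := by
          apply mul_le_mul (mul_le_mul le_rfl (pow_le_one₀ hp0 hp1) (pow_nonneg hp0 _)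
            (Nat.cast_nonneg _)) (pow_le_one₀ (by linarith) (by linarith))
            (pow_nonneg (by linarith) _) (by positivity)
    _ = ((n₀ - m).choose k : ℝ) := by ring
    _ ≤ 2 ^ n₀ := by
          have h1 : (n₀ - m).choose k ≤ 2 ^ n₀ := by
            calc (n₀ - m).choose k ≤ 2 ^ (n₀ - m) := by
                  rcases le_or_gt k (n₀ - m) with h | h
                  · calc (n₀-m).choose k ≤ ∑ j ∈ Finset.range (n₀ - m + 1), (n₀-m).choose j :=
                        Finset.single_le_sum (f := fun j => (n₀-m).choose j)
                          (fun _ _ => Nat.zero_le _) (Finset.mem_range.mpr (Nat.lt_succ_of_le h))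
                    _ = 2 ^ (n₀ - m) := Nat.sum_range_choose _
                  · rw [Nat.choose_eq_zero_of_lt h]; exact Nat.zero_le _
            _ ≤ 2 ^ n₀ := Nat.pow_le_pow_right (by norm_num) (Nat.sub_le _ _)
          exact_mod_cast h1
  have hgInt : Integrable (fun ω => φ (a s ω)) μ := by
    refine Integrable.mono' (integrable_const ((2:ℝ) ^ n₀))
      ((hgFs.mono (hFle s) le_rfl).aestronglyMeasurable)
      (Filter.Eventually.of_forall fun ω => hφbound (a s ω))
  -- the partition events
  set R : Finset (Fin n₀) → Set Ω := fun T => {ω | ∀ i, i ∈ T ↔ U i ω ≤ s} with hRdef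
  have hRmem : ∀ T ω, ω ∈ R T ↔ ∀ i, i ∈ T ↔ U i ω ≤ s := by
    intro T ω; rw [hRdef]; exact Iff.rfl
  have hRmeas : ∀ T, MeasurableSet (R T) := by
    intro T
    have h1 : R T = ⋂ i, {ω | i ∈ T ↔ U i ω ≤ s} := by
      ext ω; simp only [hRdef, Set.mem_iInter, Set.mem_setOf_eq]
    rw [h1]
    refine MeasurableSet.iInter fun i => ?_
    by_cases h : i ∈ T
    · simp only [h, true_iff]
      exact measurableSet_le (hmeas i) measurable_const
    · simp only [h, false_iff]
      exact (measurableSet_le (hmeas i) measurable_const).compl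
  have hRdisj : ∀ T₁ T₂ : Finset (Fin n₀), T₁ ≠ T₂ → Disjoint (R T₁) (R T₂) := by
    intro T₁ T₂ hne
    rw [Set.disjoint_left]
    intro ω h1 h2
    rw [hRmem] at h1 h2
    exact hne (Finset.ext fun i => (h1 i).trans ((h2 i).symm))
  have hpart : ∀ X : Set Ω, X = ⋃ T ∈ (Finset.univ : Finset (Finset (Fin n₀))), X ∩ R T := by
    intro X
    apply Set.Subset.antisymm
    · intro ω hω
      refine Set.mem_iUnion₂.mpr ⟨Finset.univ.filter (fun i => U i ω ≤ s), Finset.mem_univ _,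
        hω, ?_⟩
      rw [hRmem]
      intro i
      simp [Finset.mem_filter]
    · intro ω hω
      obtain ⟨T, _, hω2⟩ := Set.mem_iUnion₂.mp hω
      exact hω2.1
  -- marginal probabilities
  have hsingle : ∀ (i : Fin n₀) (S : Set ℝ), MeasurableSet S →
      μ (U i ⁻¹' S) = volume (S ∩ Set.Icc 0 1) := by
    intro i S hS
    rw [← Measure.map_apply (hmeas i) hS, hunif i, Measure.restrict_apply hS]
  have hIoiS : ∀ i : Fin n₀, μ (U i ⁻¹' Set.Ioi s) = ENNReal.ofReal (1 - s) := by
    intro i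
    rw [hsingle i _ measurableSet_Ioi]
    have h1 : Set.Ioi s ∩ Set.Icc (0:ℝ) 1 = Set.Ioc s 1 := by
      ext x
      simp only [Set.mem_inter_iff, Set.mem_Ioi, Set.mem_Icc, Set.mem_Ioc]
      constructor
      · rintro ⟨h1, _, h3⟩; exact ⟨h1, h3⟩
      · rintro ⟨h1, h2⟩; exact ⟨h1, hs.trans h1.le, h2⟩
    rw [h1, Real.volume_Ioc]
  have hIocST : ∀ i : Fin n₀, μ (U i ⁻¹' Set.Ioc s t) = ENNReal.ofReal (t - s) := by
    intro i
    rw [hsingle i _ measurableSet_Ioc]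
    have h1 : Set.Ioc s t ∩ Set.Icc (0:ℝ) 1 = Set.Ioc s t := by
      rw [Set.inter_eq_left]
      intro x hx
      exact ⟨hs.trans hx.1.le, hx.2.trans ht.le⟩
    rw [h1, Real.volume_Ioc]
  have hIoiT : ∀ i : Fin n₀, μ (U i ⁻¹' Set.Ioi t) = ENNReal.ofReal (1 - t) := by
    intro i
    rw [hsingle i _ measurableSet_Ioi]
    have h1 : Set.Ioi t ∩ Set.Icc (0:ℝ) 1 = Set.Ioc t 1 := by
      ext x
      simp only [Set.mem_inter_iff, Set.mem_Ioi, Set.mem_Icc, Set.mem_Ioc]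
      constructor
      · rintro ⟨h1, _, h3⟩; exact ⟨h1, h3⟩
      · rintro ⟨h1, h2⟩; exact ⟨h1, (hs.trans hst).trans h1.le, h2⟩
    rw [h1, Real.volume_Ioc]
  -- the key per-piece computation
  have key : ∀ (B : Set (Fin n₀ → ℝ)), MeasurableSet B → ∀ T : Finset (Fin n₀),
      ∃ c : ENNReal, c ≠ ⊤ ∧
      μ (V ⁻¹' B ∩ R T) = c * ENNReal.ofReal (1 - s) ^ Tᶜ.card ∧
      μ ((V ⁻¹' B ∩ R T) ∩ E)
        = c * ((Tᶜ.card.choose k : ENNReal) * ENNReal.ofReal (t - s) ^ k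
            * ENNReal.ofReal (1 - t) ^ (Tᶜ.card - k)) := by
    intro B hB T
    set L : Ω → ({x // x ∈ T} → ℝ) := fun ω i => U i.1 ω with hL
    set Rm : Ω → ({x // x ∈ Tᶜ} → ℝ) := fun ω i => U i.1 ω with hRm
    have hindep : IndepFun L Rm μ := hiid.indepFun_finset T Tᶜ disjoint_compl_right hmeas
    set extd : ({x // x ∈ T} → ℝ) → (Fin n₀ → ℝ) := fun y i => if h : i ∈ T then y ⟨i, h⟩ else 2
      with hextd
    have hextMeas : Measurable extd := by
      apply measurable_pi_lambda
      intro i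
      by_cases h : i ∈ T
      · simp only [hextd, dif_pos h]
        exact measurable_pi_apply _
      · simp only [hextd, dif_neg h]
        exact measurable_const
    set B₁ : Set ({x // x ∈ T} → ℝ) := {y | (∀ i, y i ≤ s) ∧ extd y ∈ B} with hB₁def
    have hB₁ : MeasurableSet B₁ := by
      have h1 : B₁ = (⋂ i, {y : {x // x ∈ T} → ℝ | y i ≤ s}) ∩ extd ⁻¹' B := by
        ext y
        simp only [hB₁def, Set.mem_iInter, Set.mem_setOf_eq, Set.mem_inter_iff, Set.mem_preimage]
      rw [h1]
      exact (MeasurableSet.iInter fun i =>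
        measurableSet_le (measurable_pi_apply i) measurable_const).inter (hextMeas hB)
    set B₂' : Set ({x // x ∈ Tᶜ} → ℝ) := {z | ∀ i, s < z i} with hB₂'def
    have hB₂' : MeasurableSet B₂' := by
      rw [hB₂'def, Set.setOf_forall]
      exact MeasurableSet.iInter fun i => measurableSet_lt measurable_const (measurable_pi_apply i)
    set B₂ : Set ({x // x ∈ Tᶜ} → ℝ) :=
      {z | (∀ i, s < z i) ∧ (Finset.univ.filter fun i => z i ≤ t).card = k} with hB₂def
    have hB₂ : MeasurableSet B₂ := by
      have h1 : B₂ = B₂' ∩ ((fun z : {x // x ∈ Tᶜ} → ℝ =>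
          (Finset.univ.filter fun i => z i ≤ t).card) ⁻¹' {k}) := by
        ext z
        simp only [hB₂def, hB₂'def, Set.mem_setOf_eq, Set.mem_inter_iff, Set.mem_preimage,
          Set.mem_singleton_iff]
      rw [h1]
      exact hB₂'.inter ((measurable_card_filter_aux t) (measurableSet_singleton k))
    -- reconstruction of the R T condition
    have hrec : ∀ ω, (∀ i : {x // x ∈ T}, U i.1 ω ≤ s) → (∀ i : {x // x ∈ Tᶜ}, s < U i.1 ω) →
        (∀ i, i ∈ T ↔ U i ω ≤ s) := by
      intro ω hy hz i
      constructor
      · intro h; exact hy ⟨i, h⟩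
      · intro h
        by_contra hni
        exact absurd h (not_le.mpr (hz ⟨i, Finset.mem_compl.mpr hni⟩))
    have hVext : ∀ ω, (∀ i, i ∈ T ↔ U i ω ≤ s) → V ω = extd (L ω) := by
      intro ω hω
      funext i
      by_cases h : i ∈ T
      · simp only [hV, hextd, hL, dif_pos h, if_pos ((hω i).mp h)]
      · have h2 : ¬ U i ω ≤ s := fun hc => h ((hω i).mpr hc)
        simp only [hV, hextd, dif_neg h, if_neg h2]
    -- set identities
    have e2 : V ⁻¹' B ∩ R T = L ⁻¹' B₁ ∩ Rm ⁻¹' B₂' := by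
      ext ω
      simp only [Set.mem_inter_iff, Set.mem_preimage, hB₁def, hB₂'def, Set.mem_setOf_eq, hRmem]
      constructor
      · rintro ⟨hωB, hω⟩
        refine ⟨⟨fun i => (hω i.1).mp i.2, ?_⟩, fun i => ?_⟩
        · rw [← hVext ω hω]; exact hωB
        · have hni : ¬ (i.1 ∈ T) := Finset.mem_compl.mp i.2
          exact not_le.mp fun hc => hni ((hω i.1).mpr hc)
      · rintro ⟨⟨hy, hyB⟩, hz⟩
        have hω : ∀ i, i ∈ T ↔ U i ω ≤ s := hrec ω hy hz
        refine ⟨?_, hω⟩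
        rw [hVext ω hω]; exact hyB
    have hcardE : ∀ ω, (∀ i, i ∈ T ↔ U i ω ≤ s) →
        (a t ω - a s ω = k ↔ (Tᶜ.filter fun i => U i ω ≤ t).card = k) := by
      intro ω hω
      have hfs : Finset.univ.filter (fun i => U i ω ≤ s) = T := by
        ext i; simp [Finset.mem_filter, (hω i).symm]
      have hft : Finset.univ.filter (fun i => U i ω ≤ t)
          = T ∪ Tᶜ.filter (fun i => U i ω ≤ t) := by
        ext i
        simp only [Finset.mem_filter, Finset.mem_univ, true_and, Finset.mem_union,
          Finset.mem_compl]
        constructor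
        · intro h
          by_cases hi : i ∈ T
          · exact Or.inl hi
          · exact Or.inr ⟨hi, h⟩
        · rintro (hi | ⟨_, h⟩)
          · exact ((hω i).mp hi).trans hst
          · exact h
      have hdisj : Disjoint T (Tᶜ.filter fun i => U i ω ≤ t) :=
        disjoint_compl_right.mono_right (Finset.filter_subset _ _)
      rw [ha t ω, ha s ω, hfs, hft, Finset.card_union_of_disjoint hdisj, Nat.add_sub_cancel_left]
    have e1 : (V ⁻¹' B ∩ R T) ∩ E = L ⁻¹' B₁ ∩ Rm ⁻¹' B₂ := by
      rw [e2]
      ext ω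
      simp only [Set.mem_inter_iff, Set.mem_preimage, hB₂def, hB₂'def, hE, Set.mem_setOf_eq,
        hB₁def]
      constructor
      · rintro ⟨⟨hy, hz⟩, h3⟩
        have hω : ∀ i, i ∈ T ↔ U i ω ≤ s := hrec ω hy.1 hz
        refine ⟨hy, hz, ?_⟩
        rw [card_filter_attach_aux Tᶜ (fun i => U i ω ≤ t)]
        exact (hcardE ω hω).mp h3
      · rintro ⟨hy, hz, h4⟩
        have hω : ∀ i, i ∈ T ↔ U i ω ≤ s := hrec ω hy.1 hz
        refine ⟨⟨hy, hz⟩, (hcardE ω hω).mpr ?_⟩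
        rw [← card_filter_attach_aux Tᶜ (fun i => U i ω ≤ t)]
        exact h4
    have m2 : μ (V ⁻¹' B ∩ R T) = μ (L ⁻¹' B₁) * μ (Rm ⁻¹' B₂') := by
      rw [e2]; exact hindep.measure_inter_preimage_eq_mul B₁ B₂' hB₁ hB₂'
    have m1 : μ ((V ⁻¹' B ∩ R T) ∩ E) = μ (L ⁻¹' B₁) * μ (Rm ⁻¹' B₂) := by
      rw [e1]; exact hindep.measure_inter_preimage_eq_mul B₁ B₂ hB₁ hB₂
    have mB₂' : μ (Rm ⁻¹' B₂') = ENNReal.ofReal (1 - s) ^ Tᶜ.card := by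
      have h1 : Rm ⁻¹' B₂' = ⋂ i ∈ Tᶜ, U i ⁻¹' Set.Ioi s := by
        ext ω
        simp only [Set.mem_preimage, hB₂'def, Set.mem_setOf_eq, Set.mem_iInter, Set.mem_Ioi, hRm]
        exact ⟨fun h i hi => h ⟨i, hi⟩, fun h i => h i.1 i.2⟩
      rw [h1, hiid.measure_inter_preimage_eq_mul Tᶜ (fun i _ => measurableSet_Ioi),
        Finset.prod_congr rfl (fun i _ => hIoiS i), Finset.prod_const]
    have mB₂ : μ (Rm ⁻¹' B₂) = (Tᶜ.card.choose k : ENNReal) * ENNReal.ofReal (t - s) ^ k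
        * ENNReal.ofReal (1 - t) ^ (Tᶜ.card - k) := by
      have h1 : Rm ⁻¹' B₂ = ⋃ J ∈ Finset.powersetCard k Tᶜ,
          ⋂ i ∈ Tᶜ, U i ⁻¹' (if i ∈ J then Set.Ioc s t else Set.Ioi t) := by
        ext ω
        simp only [Set.mem_preimage, hB₂def, Set.mem_setOf_eq, hRm, Set.mem_iUnion,
          Set.mem_iInter, Finset.mem_powersetCard, Set.mem_Ioc, Set.mem_Ioi, exists_prop]
        constructor
        · rintro ⟨h1, h2⟩
          refine ⟨Tᶜ.filter fun i => U i ω ≤ t, ⟨Finset.filter_subset _ _, ?_⟩, ?_⟩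
          · rw [← card_filter_attach_aux Tᶜ (fun i => U i ω ≤ t)]; exact h2
          · intro i hi
            by_cases hiJ : i ∈ Tᶜ.filter fun i => U i ω ≤ t
            · rw [if_pos hiJ]
              exact ⟨h1 ⟨i, hi⟩, (Finset.mem_filter.mp hiJ).2⟩
            · rw [if_neg hiJ]
              have hnle : ¬ U i ω ≤ t := fun hc => hiJ (Finset.mem_filter.mpr ⟨hi, hc⟩)
              exact not_le.mp hnle
        · rintro ⟨J, ⟨hJsub, hJcard⟩, hω⟩
          have hmem : ∀ i ∈ Tᶜ, (U i ω ≤ t ↔ i ∈ J) := by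
            intro i hi
            by_cases hiJ : i ∈ J
            · simp only [hiJ, iff_true]
              have h5 := hω i hi; rw [if_pos hiJ] at h5; exact h5.2
            · simp only [hiJ, iff_false]
              have h5 := hω i hi; rw [if_neg hiJ] at h5
              exact not_le.mpr h5
          constructor
          · intro i
            have h5 := hω i.1 i.2
            by_cases hiJ : i.1 ∈ J
            · rw [if_pos hiJ] at h5; exact h5.1
            · rw [if_neg hiJ] at h5; exact lt_of_le_of_lt hst h5
          · rw [card_filter_attach_aux Tᶜ (fun i => U i ω ≤ t)]
            have h6 : Tᶜ.filter (fun i => U i ω ≤ t) = J := by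
              ext i
              simp only [Finset.mem_filter]
              constructor
              · rintro ⟨hi, hle⟩; exact (hmem i hi).mp hle
              · intro hiJ; exact ⟨hJsub hiJ, (hmem i (hJsub hiJ)).mpr hiJ⟩
            rw [h6, hJcard]
      have hmsets : ∀ (J : Finset (Fin n₀)), ∀ i ∈ Tᶜ,
          MeasurableSet (if i ∈ J then Set.Ioc s t else Set.Ioi t) := by
        intro J i _
        by_cases hiJ : i ∈ J
        · rw [if_pos hiJ]; exact measurableSet_Ioc
        · rw [if_neg hiJ]; exact measurableSet_Ioi
      rw [h1, measure_biUnion_finset ?disj ?msb]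
      case msb =>
        intro J _
        exact Finset.measurableSet_biInter _ fun i hi => (hmeas i) (hmsets J i hi)
      case disj =>
        intro J₁ hJ₁ J₂ hJ₂ hne
        rw [Finset.mem_coe, Finset.mem_powersetCard] at hJ₁ hJ₂
        have hnsub : ¬ (J₁ ⊆ J₂) := by
          intro hsub
          exact hne (Finset.eq_of_subset_of_card_le hsub (by rw [hJ₁.2, hJ₂.2]))
        obtain ⟨i, hi1, hi2⟩ := Finset.not_subset.mp hnsub
        rw [Function.onFun, Set.disjoint_left]
        intro ω hω₁ hω₂
        have h5 := Set.mem_iInter₂.mp hω₁ i (hJ₁.1 hi1)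
        have h6 := Set.mem_iInter₂.mp hω₂ i (hJ₁.1 hi1)
        rw [Set.mem_preimage, if_pos hi1] at h5
        rw [Set.mem_preimage, if_neg hi2] at h6
        exact absurd h5.2 (not_le.mpr h6)
      have hterm : ∀ J ∈ Finset.powersetCard k Tᶜ,
          μ (⋂ i ∈ Tᶜ, U i ⁻¹' (if i ∈ J then Set.Ioc s t else Set.Ioi t))
            = ENNReal.ofReal (t - s) ^ k * ENNReal.ofReal (1 - t) ^ (Tᶜ.card - k) := by
        intro J hJ
        rw [Finset.mem_powersetCard] at hJ
        rw [hiid.measure_inter_preimage_eq_mul Tᶜ (hmsets J)]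
        calc ∏ i ∈ Tᶜ, μ (U i ⁻¹' (if i ∈ J then Set.Ioc s t else Set.Ioi t))
            = ∏ i ∈ J ∪ (Tᶜ \ J), μ (U i ⁻¹' (if i ∈ J then Set.Ioc s t else Set.Ioi t)) := by
              rw [Finset.union_sdiff_of_subset hJ.1]
          _ = (∏ i ∈ J, μ (U i ⁻¹' (if i ∈ J then Set.Ioc s t else Set.Ioi t)))
              * ∏ i ∈ Tᶜ \ J, μ (U i ⁻¹' (if i ∈ J then Set.Ioc s t else Set.Ioi t)) :=
              Finset.prod_union Finset.disjoint_sdiff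
          _ = ENNReal.ofReal (t - s) ^ k * ENNReal.ofReal (1 - t) ^ (Tᶜ.card - k) := by
              rw [Finset.prod_congr rfl (fun i hi => by rw [if_pos hi, hIocST i]),
                Finset.prod_const, hJ.2,
                Finset.prod_congr rfl (fun i hi => by
                  rw [if_neg (Finset.mem_sdiff.mp hi).2, hIoiT i]),
                Finset.prod_const, Finset.card_sdiff_of_subset hJ.1, hJ.2]
      rw [Finset.sum_congr rfl hterm, Finset.sum_const, Finset.card_powersetCard, nsmul_eq_mul,
        mul_assoc]
    exact ⟨μ (L ⁻¹' B₁), measure_ne_top μ _, by rw [m2, mB₂'], by rw [m1, mB₂, mul_assoc]⟩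
  -- the main set-integral identity
  have main : ∀ A : Set Ω, MeasurableSet[F s] A →
      ∫ x in A, φ (a s x) ∂μ = ∫ x in A, (if a t x - a s x = k then (1:ℝ) else 0) ∂μ := by
    intro A hA
    obtain ⟨B, hB, rfl⟩ := MeasurableSpace.measurableSet_comap.mp (hFV A hA)
    rw [hfeq]
    have hAm0 : MeasurableSet (V ⁻¹' B) := hVmeas hB
    have hIndInt : Integrable (E.indicator (fun _ => (1:ℝ))) μ :=
      (integrable_const 1).indicator hEmeas
    have hsum1 : ∫ x in V ⁻¹' B, φ (a s x) ∂μ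
        = ∑ T ∈ (Finset.univ : Finset (Finset (Fin n₀))),
            ∫ x in V ⁻¹' B ∩ R T, φ (a s x) ∂μ := by
      conv_lhs => rw [hpart (V ⁻¹' B)]
      exact integral_biUnion_finset Finset.univ (fun T _ => hAm0.inter (hRmeas T))
        (fun T₁ _ T₂ _ hne =>
          ((hRdisj T₁ T₂ hne).mono Set.inter_subset_right Set.inter_subset_right))
        (fun T _ => hgInt.integrableOn)
    have hsum2 : ∫ x in V ⁻¹' B, E.indicator (fun _ => (1:ℝ)) x ∂μ
        = ∑ T ∈ (Finset.univ : Finset (Finset (Fin n₀))),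
            ∫ x in V ⁻¹' B ∩ R T, E.indicator (fun _ => (1:ℝ)) x ∂μ := by
      conv_lhs => rw [hpart (V ⁻¹' B)]
      exact integral_biUnion_finset Finset.univ (fun T _ => hAm0.inter (hRmeas T))
        (fun T₁ _ T₂ _ hne =>
          ((hRdisj T₁ T₂ hne).mono Set.inter_subset_right Set.inter_subset_right))
        (fun T _ => hIndInt.integrableOn)
    rw [hsum1, hsum2]
    refine Finset.sum_congr rfl fun T _ => ?_
    obtain ⟨c, hc, hm2, hm1⟩ := key B hB T
    have hR2 : ∫ x in V ⁻¹' B ∩ R T, E.indicator (fun _ => (1:ℝ)) x ∂μ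
        = (μ ((V ⁻¹' B ∩ R T) ∩ E)).toReal := by
      rw [setIntegral_indicator hEmeas, setIntegral_const, smul_eq_mul, mul_one, measureReal_def]
    have hL2 : ∫ x in V ⁻¹' B ∩ R T, φ (a s x) ∂μ
        = φ T.card * (μ (V ⁻¹' B ∩ R T)).toReal := by
      rw [setIntegral_congr_fun (hAm0.inter (hRmeas T))
        (g := fun _ => φ T.card) ?_, setIntegral_const, smul_eq_mul, measureReal_def, mul_comm]
      intro ω hω
      have hω2 : ∀ i, i ∈ T ↔ U i ω ≤ s := (hRmem T ω).mp hω.2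
      have hfs : Finset.univ.filter (fun i => U i ω ≤ s) = T := by
        ext i; simp [Finset.mem_filter, (hω2 i).symm]
      show φ (a s ω) = φ T.card
      rw [ha s ω, hfs]
    rw [hR2, hL2, hm1, hm2]
    rw [ENNReal.toReal_mul, ENNReal.toReal_mul, ENNReal.toReal_mul, ENNReal.toReal_mul,
      ENNReal.toReal_pow, ENNReal.toReal_pow, ENNReal.toReal_pow,
      ENNReal.toReal_ofReal (by linarith : (0:ℝ) ≤ 1 - s),
      ENNReal.toReal_ofReal (by linarith : (0:ℝ) ≤ t - s),
      ENNReal.toReal_ofReal (by linarith : (0:ℝ) ≤ 1 - t),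
      ENNReal.toReal_natCast]
    have hmcard : Tᶜ.card = n₀ - T.card := by
      rw [Finset.card_compl, Fintype.card_fin]
    rw [hφ, hmcard]
    simp only
    rcases le_or_gt k (n₀ - T.card) with hkm | hkm
    · have hpow : (1 - s) ^ (n₀ - T.card) = (1-s)^k * (1-s)^(n₀ - T.card - k) := by
        rw [← pow_add, Nat.add_sub_cancel' hkm]
      have h7 : p ^ k * (1-s)^k = (t-s)^k := by rw [← mul_pow, hpts]
      have h8 : (1-p)^(n₀ - T.card - k) * (1-s)^(n₀ - T.card - k) = (1-t)^(n₀ - T.card - k) := by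
        rw [← mul_pow, hq1t]
      rw [hpow]
      calc ((n₀ - T.card).choose k : ℝ) * p ^ k * (1 - p) ^ (n₀ - T.card - k)
            * (c.toReal * ((1-s)^k * (1-s)^(n₀ - T.card - k)))
          = c.toReal * (((n₀ - T.card).choose k : ℝ) * (p ^ k * (1-s)^k)
              * ((1 - p) ^ (n₀ - T.card - k) * (1-s)^(n₀ - T.card - k))) := by ring
        _ = c.toReal * (((n₀ - T.card).choose k : ℝ) * (t-s)^k * (1-t)^(n₀ - T.card - k)) := by
              rw [h7, h8]
    · rw [Nat.choose_eq_zero_of_lt hkm]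
      simp
  exact (ae_eq_condExp_of_forall_setIntegral_eq (hFle s) hfInt
    (fun A hA hμA => hgInt.integrableOn)
    (fun A hA hμA => main A hA)
    (StronglyMeasurable.aestronglyMeasurable (Measurable.stronglyMeasurable hgFs))).symm
end

section
/- Let a_t be the counting process of n₀ i.i.d. Uniform[0,1] random variables, â_t = a_t - n₀ t, g an arbitrary deterministic function, and τ = inf{t : â_t ≤ g(t)}. Then E[â_τ / τ] ≤ 0. -/
open MeasureTheory Set ProbabilityTheory
open scoped ENNReal NNReal

namespace SR

variable (n : ℕ) (g : ℝ → ℝ)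

/-- counting function -/
noncomputable def N (u : Fin n → ℝ) (t : ℝ) : ℕ := (Finset.univ.filter (fun i => u i ≤ t)).card

def S (u : Fin n → ℝ) : Set ℝ :=
  {t ∈ Set.Ioc (0:ℝ) 1 | (N n u t : ℝ) - n * t ≤ g t} ∪ {1}

noncomputable def T (u : Fin n → ℝ) : ℝ := sInf (S n g u)

variable {n g}

lemma one_mem_S (u : Fin n → ℝ) : (1:ℝ) ∈ S n g u := Or.inr rfl

lemma S_nonempty (u : Fin n → ℝ) : (S n g u).Nonempty := ⟨1, one_mem_S u⟩

lemma S_bddBelow (u : Fin n → ℝ) : BddBelow (S n g u) := by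
  refine ⟨0, fun t ht => ?_⟩
  rcases ht with ⟨⟨h1, _⟩, _⟩ | h
  · exact le_of_lt h1
  · simp only [Set.mem_singleton_iff] at h; simp [h]

lemma T_nonneg (u : Fin n → ℝ) : 0 ≤ T n g u :=
  le_csInf (S_nonempty u) (fun t ht => by
    rcases ht with ⟨⟨h1, _⟩, _⟩ | h
    · exact le_of_lt h1
    · simp only [Set.mem_singleton_iff] at h; simp [h])

lemma T_le_one (u : Fin n → ℝ) : T n g u ≤ 1 := csInf_le (S_bddBelow u) (one_mem_S u)

lemma T_le_of_mem {u : Fin n → ℝ} {t : ℝ} (ht : t ∈ S n g u) : T n g u ≤ t :=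
  csInf_le (S_bddBelow u) ht

lemma N_le_n (u : Fin n → ℝ) (t : ℝ) : N n u t ≤ n := by
  simpa [N] using Finset.card_filter_le (Finset.univ : Finset (Fin n)) (fun i => u i ≤ t)

lemma N_mono (u : Fin n → ℝ) {t t' : ℝ} (h : t ≤ t') : N n u t ≤ N n u t' := by
  apply Finset.card_le_card
  intro i hi
  simp only [Finset.mem_filter] at hi ⊢
  exact ⟨hi.1, hi.2.trans h⟩

lemma N_cast_sum (u : Fin n → ℝ) (t : ℝ) :
    (N n u t : ℝ) = ∑ i, if u i ≤ t then (1:ℝ) else 0 := by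
  rw [N, Finset.card_filter]
  push_cast
  rfl

variable (n)

noncomputable def os (k : ℕ) (u : Fin n → ℝ) : ℝ := sInf {t : ℝ | k ≤ N n u t}

variable {n}

lemma N_measurable (t : ℝ) : Measurable (fun u : Fin n → ℝ => N n u t) := by
  have h : (fun u : Fin n → ℝ => N n u t)
      = fun u => ∑ i, if u i ≤ t then 1 else 0 := by
    funext u
    exact Finset.card_filter _ _
  rw [h]
  exact Finset.measurable_sum _ (fun i _ =>
    Measurable.ite (measurableSet_le (measurable_pi_apply i) measurable_const)
      measurable_const measurable_const)

lemma os_set_bddBelow {k : ℕ} (hk1 : 1 ≤ k) (u : Fin n → ℝ) :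
    BddBelow {t : ℝ | k ≤ N n u t} := by
  rcases isEmpty_or_nonempty (Fin n) with hE | hNE
  · refine ⟨0, fun t ht => ?_⟩
    have : N n u t = 0 := by simp [N]
    simp only [Set.mem_setOf_eq] at ht
    omega
  · obtain ⟨i0⟩ := hNE
    refine ⟨Finset.univ.inf' ⟨i0, Finset.mem_univ _⟩ u, fun t ht => ?_⟩
    have hpos : 0 < N n u t := lt_of_lt_of_le hk1 ht
    obtain ⟨j, hj⟩ := Finset.card_pos.mp hpos
    simp only [Finset.mem_filter] at hj
    exact le_trans (Finset.inf'_le u (Finset.mem_univ j)) hj.2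

lemma os_set_nonempty {k : ℕ} (hk2 : k ≤ n) (hn : 0 < n) (u : Fin n → ℝ) :
    {t : ℝ | k ≤ N n u t}.Nonempty := by
  have hne : (Finset.univ : Finset (Fin n)).Nonempty := ⟨⟨0, hn⟩, Finset.mem_univ _⟩
  refine ⟨Finset.univ.sup' hne u, ?_⟩
  have : Finset.univ.filter (fun i => u i ≤ Finset.univ.sup' hne u) = Finset.univ := by
    apply Finset.filter_true_of_mem
    intro i _
    exact Finset.le_sup' u (Finset.mem_univ i)
  simp only [Set.mem_setOf_eq, N, this]
  simpa using hk2

lemma os_le_iff {k : ℕ} (hk1 : 1 ≤ k) (hk2 : k ≤ n) (u : Fin n → ℝ) (t : ℝ) :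
    os n k u ≤ t ↔ k ≤ N n u t := by
  have hn : 0 < n := lt_of_lt_of_le hk1 hk2
  constructor
  · intro hos
    by_cases hB : (Finset.univ.filter (fun j => t < u j)).Nonempty
    · obtain ⟨j₀, hj₀mem, hj₀⟩ := Finset.exists_mem_eq_inf' hB u
      simp only [Finset.mem_filter] at hj₀mem
      set ε : ℝ := Finset.inf' _ hB u - t with hε_def
      have hε : 0 < ε := by rw [hε_def, hj₀]; linarith [hj₀mem.2]
      have h1 : sInf {t : ℝ | k ≤ N n u t} < t + ε/2 := lt_of_le_of_lt hos (by linarith)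
      obtain ⟨t', ht', hlt⟩ := (csInf_lt_iff (os_set_bddBelow hk1 u)
        (os_set_nonempty hk2 hn u)).mp h1
      have h2 : k ≤ N n u (t + ε/2) := le_trans ht' (N_mono u hlt.le)
      have h3 : N n u (t + ε/2) = N n u t := by
        unfold N
        congr 1
        apply Finset.filter_congr
        intro j _
        constructor
        · intro hj
          by_contra hj'
          push_neg at hj'
          have hjB : j ∈ Finset.univ.filter (fun j => t < u j) :=
            Finset.mem_filter.mpr ⟨Finset.mem_univ _, hj'⟩
          have := Finset.inf'_le u hjB
          rw [← hε_def] at *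
          have : t + ε ≤ u j := by
            have h4 : Finset.inf' _ hB u = t + ε := by rw [hε_def]; ring
            rw [← h4]; exact Finset.inf'_le u hjB
          linarith
        · intro hj
          linarith
      omega
    · have : Finset.univ.filter (fun i => u i ≤ t) = Finset.univ := by
        apply Finset.filter_true_of_mem
        intro i _
        by_contra hc
        exact hB ⟨i, Finset.mem_filter.mpr ⟨Finset.mem_univ _, by linarith⟩⟩
      have : N n u t = n := by simp [N, this]
      omega
  · intro h
    exact csInf_le (os_set_bddBelow hk1 u) h

lemma os_measurable {k : ℕ} (hk1 : 1 ≤ k) (hk2 : k ≤ n) : Measurable (os n k) := by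
  apply measurable_of_Iic
  intro s
  have h : os n k ⁻¹' Set.Iic s = {u : Fin n → ℝ | k ≤ N n u s} := by
    ext u
    simp only [Set.mem_preimage, Set.mem_Iic, Set.mem_setOf_eq]
    exact os_le_iff hk1 hk2 u s
  rw [h]
  exact measurableSet_le measurable_const (N_measurable s)

variable (n g)

def A (k : ℕ) : Set ℝ := {t ∈ Set.Ioc (0:ℝ) 1 | (k : ℝ) - n * t ≤ g t}

noncomputable def phi (k : ℕ) (x : ℝ) : ℝ := sInf (A n g k ∩ Set.Ici x ∪ {2})

noncomputable def L (k : ℕ) (u : Fin n → ℝ) : ℝ := if k = 0 then 0 else os n k u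

noncomputable def R (k : ℕ) (u : Fin n → ℝ) : ℝ := if k = n then 2 else os n (k+1) u

noncomputable def e (k : ℕ) (u : Fin n → ℝ) : ℝ :=
  if phi n g k (L n k u) < R n k u then min (phi n g k (L n k u)) 1 else 1

variable {n g}

lemma phi_bddBelow (k : ℕ) (x : ℝ) : BddBelow (A n g k ∩ Set.Ici x ∪ {2}) := by
  refine ⟨0, fun t ht => ?_⟩
  rcases ht with ⟨⟨⟨h1, _⟩, _⟩, _⟩ | h
  · exact le_of_lt h1
  · simp only [Set.mem_singleton_iff] at h; simp [h]

lemma phi_nonempty (k : ℕ) (x : ℝ) : (A n g k ∩ Set.Ici x ∪ {2}).Nonempty :=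
  ⟨2, Or.inr rfl⟩

lemma phi_mono (k : ℕ) : Monotone (phi n g k) := by
  intro x x' hxx
  apply csInf_le_csInf (phi_bddBelow k x) (phi_nonempty k x')
  apply Set.union_subset_union_left
  exact Set.inter_subset_inter_right _ (Set.Ici_subset_Ici.mpr hxx)

lemma phi_measurable (k : ℕ) : Measurable (phi n g k) := (phi_mono k).measurable

lemma phi_le {k : ℕ} {t x : ℝ} (ht : t ∈ A n g k) (hx : x ≤ t) : phi n g k x ≤ t :=
  csInf_le (phi_bddBelow k x) (Or.inl ⟨ht, hx⟩)

/-- the key interval characterization -/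
lemma N_eq_iff {k : ℕ} (hk : k ≤ n) (u : Fin n → ℝ) {t : ℝ} (ht : t ∈ Set.Ioc (0:ℝ) 1) :
    N n u t = k ↔ (L n k u ≤ t ∧ t < R n k u) := by
  rcases Nat.eq_zero_or_pos k with rfl | hk1
  · have hL : L n 0 u = 0 := by simp [L]
    rw [hL]
    rcases Nat.eq_zero_or_pos n with hn | hn
    · have h0 : N n u t = 0 := by
        have hc1 : (Finset.univ : Finset (Fin n)).card = 0 := by simp [hn]
        have hc2 := Finset.card_filter_le (Finset.univ : Finset (Fin n)) (fun i => u i ≤ t)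
        show (Finset.univ.filter (fun i => u i ≤ t)).card = 0
        omega
      have hR : R n 0 u = 2 := by simp [R, hn]
      rw [hR, h0]
      constructor
      · intro _; exact ⟨le_of_lt ht.1, by linarith [ht.2]⟩
      · intro _; rfl
    · have hR : R n 0 u = os n 1 u := by
        simp only [R]
        rw [if_neg (by omega)]
      rw [hR]
      constructor
      · intro h
        refine ⟨le_of_lt ht.1, ?_⟩
        by_contra hc
        push_neg at hc
        have := (os_le_iff le_rfl hn u t).mp hc
        omega
      · rintro ⟨_, h2⟩
        have h3 : ¬ (1 ≤ N n u t) := fun hcon => by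
          have := (os_le_iff le_rfl hn u t).mpr hcon
          linarith
        omega
  · have hL : L n k u = os n k u := by simp only [L]; rw [if_neg (by omega)]
    rw [hL]
    rcases eq_or_lt_of_le hk with hkn | hkn
    · have hR : R n k u = 2 := by simp only [R]; rw [if_pos hkn]
      rw [hR]
      constructor
      · intro h
        exact ⟨(os_le_iff hk1 hk u t).mpr (by omega), by linarith [ht.2]⟩
      · rintro ⟨h1, _⟩
        have h2 := (os_le_iff hk1 hk u t).mp h1
        have h3 := N_le_n u t
        omega
    · have hR : R n k u = os n (k+1) u := by
        simp only [R]; rw [if_neg (by omega)]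
      rw [hR]
      constructor
      · intro h
        refine ⟨(os_le_iff hk1 hk u t).mpr (by omega), ?_⟩
        by_contra hc
        push_neg at hc
        have := (os_le_iff (by omega) (by omega) u t).mp hc
        omega
      · rintro ⟨h1, h2⟩
        have h3 := (os_le_iff hk1 hk u t).mp h1
        have h4 : ¬ (k + 1 ≤ N n u t) := fun hcon => by
          have := (os_le_iff (by omega) (by omega) u t).mpr hcon
          linarith
        omega

lemma e_le_one (k : ℕ) (u : Fin n → ℝ) : e n g k u ≤ 1 := by
  unfold e
  split
  · exact min_le_right _ _
  · exact le_rfl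

lemma T_le_e {k : ℕ} (hk : k ≤ n) (u : Fin n → ℝ) : T n g u ≤ e n g k u := by
  unfold e
  split
  · rename_i hcond
    by_cases h1 : (1:ℝ) ≤ phi n g k (L n k u)
    · rw [min_eq_right h1]
      exact T_le_one u
    · push_neg at h1
      rw [min_eq_left h1.le]
      apply le_of_forall_pos_le_add
      intro ε hε
      set φ := phi n g k (L n k u) with hφ
      set ε' : ℝ := min ε (1 - φ) with hε'
      have hε'pos : 0 < ε' := lt_min hε (by linarith)
      have hβ : φ < min (φ + ε') (R n k u) := lt_min (by linarith) hcond
      obtain ⟨a, ha, halt⟩ := (csInf_lt_iff (phi_bddBelow k (L n k u))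
        (phi_nonempty k (L n k u))).mp hβ
      have ha2 : a ≠ 2 := by
        intro h2
        rw [h2] at halt
        have : (2:ℝ) < φ + ε' := lt_of_lt_of_le halt (min_le_left _ _)
        have : ε' ≤ 1 - φ := min_le_right _ _
        linarith
      rcases ha with ⟨haA, haL⟩ | h2
      · have haR : a < R n k u := lt_of_lt_of_le halt (min_le_right _ _)
        have hNa : N n u a = k := (N_eq_iff hk u haA.1).mpr ⟨haL, haR⟩
        have haS : a ∈ S n g u := Or.inl ⟨haA.1, by rw [hNa]; exact haA.2⟩
        have := T_le_of_mem haS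
        have : T n g u < φ + ε' := lt_of_le_of_lt this (lt_of_lt_of_le halt (min_le_left _ _))
        have : ε' ≤ ε := min_le_left _ _
        linarith
      · exact absurd h2 ha2
  · exact T_le_one u

lemma Tm_le_T (u : Fin n → ℝ) :
    (Finset.range (n+1)).inf' ⟨0, by simp⟩ (fun k => e n g k u) ≤ T n g u := by
  apply le_csInf (S_nonempty u)
  intro t ht
  rcases ht with ⟨htIoc, htcond⟩ | h1
  · set k := N n u t with hk
    have hkn : k ≤ n := N_le_n u t
    have htA : t ∈ A n g k := ⟨htIoc, htcond⟩
    have hLR := (N_eq_iff hkn u htIoc).mp rfl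
    have hφ : phi n g k (L n k u) ≤ t := phi_le htA hLR.1
    have hcond : phi n g k (L n k u) < R n k u := lt_of_le_of_lt hφ hLR.2
    have he : e n g k u ≤ t := by
      unfold e
      rw [if_pos hcond]
      exact le_trans (min_le_left _ _) hφ
    exact le_trans (Finset.inf'_le _ (Finset.mem_range.mpr (by omega))) he
  · simp only [Set.mem_singleton_iff] at h1
    subst h1
    exact le_trans (Finset.inf'_le _ (Finset.mem_range.mpr (by omega))) (e_le_one n u)

lemma T_eq_inf' (u : Fin n → ℝ) :
    T n g u = (Finset.range (n+1)).inf' ⟨0, by simp⟩ (fun k => e n g k u) := by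
  apply le_antisymm
  · apply Finset.le_inf'
    intro k hk
    exact T_le_e (by simpa using Nat.lt_succ_iff.mp (Finset.mem_range.mp hk)) u
  · exact Tm_le_T u

lemma measurable_finset_inf' {α : Type*} [MeasurableSpace α] {ι : Type*}
    {s : Finset ι} (hs : s.Nonempty) (f : ι → α → ℝ)
    (hf : ∀ i ∈ s, Measurable (f i)) :
    Measurable (fun x => s.inf' hs (fun i => f i x)) := by
  classical
  revert hf
  induction hs using Finset.Nonempty.cons_induction with
  | singleton i =>
      intro hf
      simpa using hf i (by simp)
  | cons i s his hs ih =>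
      intro hf
      have h1 : (fun x => (Finset.cons i s his).inf' (Finset.cons_nonempty his)
          (fun j => f j x)) = fun x => min (f i x) (s.inf' hs (fun j => f j x)) := by
        funext x
        exact Finset.inf'_cons hs (fun j => f j x)
      rw [h1]
      exact (hf i (by simp)).min (ih (fun j hj => hf j (by simp [hj])))

lemma e_measurable {k : ℕ} (hk : k ≤ n) : Measurable (e n g k) := by
  have hL : Measurable (L n k) := by
    unfold L
    split
    · exact measurable_const
    · exact os_measurable (by omega) hk
  have hR : Measurable (R n k) := by
    unfold R
    split
    · exact measurable_const
    · rename_i hkne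
      exact os_measurable (by omega) (by omega)
  have hφL : Measurable (fun u => phi n g k (L n k u)) := (phi_measurable k).comp hL
  unfold e
  exact Measurable.ite (measurableSet_lt hφL hR)
    (hφL.min measurable_const) measurable_const

lemma T_measurable : Measurable (T n g) := by
  have h : T n g = fun u => (Finset.range (n+1)).inf' ⟨0, by simp⟩
      (fun k => e n g k u) := funext T_eq_inf'
  rw [h]
  exact measurable_finset_inf' _ _ (fun k hk =>
    e_measurable (by simpa using Nat.lt_succ_iff.mp (Finset.mem_range.mp hk)))

/-! structural lemmas about `T` along one coordinate -/

lemma S_subset_S {u₁ u₂ : Fin n → ℝ} (hN : ∀ t ∈ Set.Ioc (0:ℝ) 1, N n u₂ t ≤ N n u₁ t) :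
    S n g u₁ ⊆ S n g u₂ := by
  intro t ht
  rcases ht with ⟨ht1, ht2⟩ | h
  · refine Or.inl ⟨ht1, ?_⟩
    have hc : (N n u₂ t : ℝ) ≤ (N n u₁ t : ℝ) := Nat.cast_le.mpr (hN t ht1)
    linarith
  · exact Or.inr h

lemma T_le_T {u₁ u₂ : Fin n → ℝ} (hN : ∀ t ∈ Set.Ioc (0:ℝ) 1, N n u₂ t ≤ N n u₁ t) :
    T n g u₂ ≤ T n g u₁ :=
  csInf_le_csInf (S_bddBelow u₂) (S_nonempty u₁) (S_subset_S hN)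

lemma N_update_le {x : Fin n → ℝ} {i : Fin n} {v v' : ℝ} (h : v' ≤ v) (t : ℝ) :
    N n (Function.update x i v) t ≤ N n (Function.update x i v') t := by
  apply Finset.card_le_card
  intro j hj
  simp only [Finset.mem_filter, Finset.mem_univ, true_and] at hj ⊢
  rcases eq_or_ne j i with rfl | hne
  · rw [Function.update_self] at hj ⊢
    linarith
  · rwa [Function.update_of_ne hne] at hj ⊢

lemma N_update_eq_of_both {x : Fin n → ℝ} {i : Fin n} {v v' t : ℝ}
    (h1 : (v ≤ t ↔ v' ≤ t)) :
    N n (Function.update x i v) t = N n (Function.update x i v') t := by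
  unfold N
  congr 1
  apply Finset.filter_congr
  intro j _
  rcases eq_or_ne j i with rfl | hne
  · rw [Function.update_self, Function.update_self]
    exact h1
  · rw [Function.update_of_ne hne, Function.update_of_ne hne]

/-- If `v' ≤ v ≤ T(update x i v)` then `T` is unchanged when moving `v` to `v'`. -/
lemma T_update_const {x : Fin n → ℝ} {i : Fin n} {v v' : ℝ} (hv' : v' ≤ v)
    (hvT : v ≤ T n g (Function.update x i v)) :
    T n g (Function.update x i v') = T n g (Function.update x i v) := by
  apply le_antisymm
  · -- S (update x i v) ⊆ S (update x i v')
    apply csInf_le_csInf (S_bddBelow _) (S_nonempty _)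
    intro t ht
    have htT : T n g (Function.update x i v) ≤ t := T_le_of_mem ht
    have hvt : v ≤ t := le_trans hvT htT
    rcases ht with ⟨ht1, ht2⟩ | h
    · refine Or.inl ⟨ht1, ?_⟩
      rw [N_update_eq_of_both (x := x) (i := i)
        (v := v') (v' := v) (iff_of_true (le_trans hv' hvt) hvt)]
      exact ht2
    · exact Or.inr h
  · exact T_le_T (fun t _ => N_update_le hv' t)

/-- If `T` hits 0 for some positive coordinate value, it is 0 for all positive values. -/
lemma T_update_zero {x : Fin n → ℝ} {i : Fin n} {v₀ v : ℝ} (h0 : 0 < v₀)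
    (hT0 : T n g (Function.update x i v₀) = 0) (hv : 0 < v) :
    T n g (Function.update x i v) = 0 := by
  apply le_antisymm _ (T_nonneg _)
  apply le_of_forall_pos_le_add
  intro ε hε
  have hδ : (0:ℝ) < min (min v v₀) ε := lt_min (lt_min hv h0) hε
  have hlt : sInf (S n g (Function.update x i v₀)) < min (min v v₀) ε := by
    rw [show sInf (S n g (Function.update x i v₀)) = T n g (Function.update x i v₀) from rfl,
      hT0]
    exact hδ
  obtain ⟨t, htS, htlt⟩ := (csInf_lt_iff (S_bddBelow _) (S_nonempty _)).mp hlt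
  have htε : t ≤ ε := le_of_lt (lt_of_lt_of_le htlt (min_le_right _ _))
  rcases htS with ⟨ht1, ht2⟩ | h1
  · have htv : ¬ (v ≤ t) := by
      have : t < v := lt_of_lt_of_le htlt (le_trans (min_le_left _ _) (min_le_left _ _))
      linarith
    have htv₀ : ¬ (v₀ ≤ t) := by
      have : t < v₀ := lt_of_lt_of_le htlt (le_trans (min_le_left _ _) (min_le_right _ _))
      linarith
    have hS : t ∈ S n g (Function.update x i v) := by
      refine Or.inl ⟨ht1, ?_⟩
      rw [N_update_eq_of_both (x := x) (i := i) (v := v) (v' := v₀)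
        (iff_of_false htv htv₀)]
      exact ht2
    calc T n g (Function.update x i v) ≤ t := T_le_of_mem hS
      _ ≤ 0 + ε := by linarith
  · simp only [Set.mem_singleton_iff] at h1
    subst h1
    calc T n g (Function.update x i v) ≤ 1 := T_le_one _
      _ ≤ 0 + ε := by linarith

/-! probability side -/

noncomputable def nu : Measure ℝ := volume.restrict (Set.Icc 0 1)

instance : IsProbabilityMeasure nu :=
  ⟨by rw [nu, Measure.restrict_apply_univ, Real.volume_Icc]; norm_num⟩

variable (n g)

noncomputable def Phii (i : Fin n) (u : Fin n → ℝ) : ℝ≥0∞ :=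
  ENNReal.ofReal (((if u i ≤ T n g u then (1:ℝ) else 0) - T n g u) / T n g u + 1)

variable {n g}

lemma Phii_measurable (i : Fin n) : Measurable (Phii n g i) := by
  apply ENNReal.measurable_ofReal.comp
  apply Measurable.add _ measurable_const
  apply Measurable.div _ T_measurable
  apply Measurable.sub _ T_measurable
  exact Measurable.ite (measurableSet_le (measurable_pi_apply i) T_measurable)
    measurable_const measurable_const

lemma ae_nu_Ioc : ∀ᵐ v ∂nu, v ∈ Set.Ioc (0:ℝ) 1 := by
  have h1 : ∀ᵐ v ∂nu, v ∈ Set.Icc (0:ℝ) 1 := ae_restrict_mem measurableSet_Icc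
  have h2 : ∀ᵐ v ∂nu, v ≠ 0 := by
    rw [ae_iff]
    have : {v : ℝ | ¬ v ≠ 0} = {0} := by ext v; simp
    rw [this, nu, Measure.restrict_apply (measurableSet_singleton 0)]
    exact le_antisymm (le_trans (measure_mono Set.inter_subset_left) (by simp)) (by simp)
  filter_upwards [h1, h2] with v hv1 hv2
  exact ⟨lt_of_le_of_ne hv1.1 (Ne.symm hv2), hv1.2⟩

lemma slice_bound (x : Fin n → ℝ) (i : Fin n) :
    ∫⁻ v, Phii n g i (Function.update x i v) ∂nu ≤ 1 := by
  have hupd : ∀ v : ℝ, Phii n g i (Function.update x i v)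
      = ENNReal.ofReal (((if v ≤ T n g (Function.update x i v) then (1:ℝ) else 0)
          - T n g (Function.update x i v)) / T n g (Function.update x i v) + 1) := by
    intro v
    rw [Phii, Function.update_self]
  by_cases hzero : ∃ v₀ : ℝ, 0 < v₀ ∧ T n g (Function.update x i v₀) = 0
  · obtain ⟨v₀, hv₀, hT0⟩ := hzero
    have hbound : ∀ᵐ v ∂nu, Phii n g i (Function.update x i v) ≤ 1 := by
      filter_upwards [ae_nu_Ioc] with v hv
      have ht0 : T n g (Function.update x i v) = 0 := T_update_zero hv₀ hT0 hv.1
      rw [hupd v, ht0]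
      have : ¬ (v ≤ (0:ℝ)) := not_le.mpr hv.1
      rw [if_neg this]
      simp
    calc ∫⁻ v, Phii n g i (Function.update x i v) ∂nu ≤ ∫⁻ _, 1 ∂nu :=
          lintegral_mono_ae hbound
      _ = 1 := by simp
  · push_neg at hzero
    set E : Set ℝ := {v : ℝ | 0 < v ∧ v ≤ 1 ∧ v ≤ T n g (Function.update x i v)} with hE_def
    by_cases hE : E.Nonempty
    · obtain ⟨v₁, hv₁⟩ := hE
      set ts := T n g (Function.update x i v₁) with hts_def
      have hts_pos : 0 < ts := lt_of_lt_of_le hv₁.1 hv₁.2.2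
      have hconst : ∀ v ∈ E, T n g (Function.update x i v) = ts := by
        intro v hv
        rcases le_total v v₁ with hle | hle
        · exact T_update_const hle hv₁.2.2
        · exact (T_update_const hle hv.2.2).symm
      have hEsub : E ⊆ Set.Ioc 0 ts := fun v hv =>
        ⟨hv.1, by rw [← hconst v hv]; exact hv.2.2⟩
      have hbddE : BddAbove E := BddAbove.mono hEsub bddAbove_Ioc
      set c := sSup E with hc_def
      have hc_le : c ≤ ts := csSup_le ⟨v₁, hv₁⟩ (fun v hv => (hEsub hv).2)
      have hbound : ∀ᵐ v ∂nu, Phii n g i (Function.update x i v)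
          ≤ Set.indicator (Set.Ioc 0 c) (fun _ => ENNReal.ofReal (1/ts)) v := by
        filter_upwards [ae_nu_Ioc] with v hv
        by_cases hvE : v ∈ E
        · have hTv := hconst v hvE
          have hvts : v ≤ ts := by rw [← hTv]; exact hvE.2.2
          rw [hupd v, hTv, if_pos hvts]
          have heq : (1 - ts) / ts + 1 = 1/ts := by field_simp; ring
          rw [heq]
          have hvIoc : v ∈ Set.Ioc 0 c := ⟨hv.1, le_csSup hbddE hvE⟩
          rw [Set.indicator_of_mem hvIoc]
        · have hvt : ¬ (v ≤ T n g (Function.update x i v)) := fun hle =>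
            hvE ⟨hv.1, hv.2, hle⟩
          rw [hupd v, if_neg hvt]
          have hTne : T n g (Function.update x i v) ≠ 0 := hzero v hv.1
          have heq : (0 - T n g (Function.update x i v)) / T n g (Function.update x i v) + 1
              = 0 := by field_simp; ring
          rw [heq]
          simp
      calc ∫⁻ v, Phii n g i (Function.update x i v) ∂nu
          ≤ ∫⁻ v, Set.indicator (Set.Ioc 0 c) (fun _ => ENNReal.ofReal (1/ts)) v ∂nu :=
            lintegral_mono_ae hbound
        _ = ENNReal.ofReal (1/ts) * nu (Set.Ioc 0 c) :=
            lintegral_indicator_const measurableSet_Ioc _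
        _ ≤ ENNReal.ofReal (1/ts) * ENNReal.ofReal c := by
            apply mul_le_mul_right
            rw [nu, Measure.restrict_apply measurableSet_Ioc]
            refine le_trans (measure_mono Set.inter_subset_left) ?_
            rw [Real.volume_Ioc]
            simp
        _ = ENNReal.ofReal (c / ts) := by
            rw [← ENNReal.ofReal_mul (by positivity)]
            rw [one_div, inv_mul_eq_div]
        _ ≤ 1 := ENNReal.ofReal_le_one.mpr ((div_le_one hts_pos).mpr hc_le)
    · have hbound : ∀ᵐ v ∂nu, Phii n g i (Function.update x i v) ≤ 0 := by
        filter_upwards [ae_nu_Ioc] with v hv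
        have hvt : ¬ (v ≤ T n g (Function.update x i v)) := fun hle =>
          hE ⟨v, hv.1, hv.2, hle⟩
        rw [hupd v, if_neg hvt]
        have hTne : T n g (Function.update x i v) ≠ 0 := hzero v hv.1
        have heq : (0 - T n g (Function.update x i v)) / T n g (Function.update x i v) + 1
            = 0 := by field_simp; ring
        rw [heq]
        simp
      calc ∫⁻ v, Phii n g i (Function.update x i v) ∂nu ≤ ∫⁻ _, 0 ∂nu :=
            lintegral_mono_ae hbound
        _ ≤ 1 := by simp

lemma pi_bound (i : Fin n) :
    ∫⁻ u, Phii n g i u ∂(Measure.pi fun _ : Fin n => nu) ≤ 1 := by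
  rw [lintegral_eq_lmarginal_univ (fun _ => (0:ℝ))]
  have huniv : (Finset.univ : Finset (Fin n)) = (Finset.univ.erase i) ∪ {i} := by
    rw [Finset.union_comm, ← Finset.insert_eq, Finset.insert_erase (Finset.mem_univ i)]
  rw [huniv, lmarginal_union _ _ (Phii_measurable i)
    (Finset.disjoint_singleton_right.mpr (Finset.notMem_erase i _)), lmarginal_singleton]
  have h1 : (fun x => ∫⁻ v, Phii n g i (Function.update x i v) ∂nu)
      ≤ (fun _ => (1:ℝ≥0∞)) := fun x => slice_bound x i
  refine le_trans (lmarginal_mono h1 _) ?_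
  have : (∫⋯∫⁻_Finset.univ.erase i, (fun _ => (1:ℝ≥0∞)) ∂(fun _ => nu)) (fun _ => (0:ℝ)) = 1 := by
    rw [MeasureTheory.lmarginal]
    simp
  rw [this]

lemma term_nonneg (u : Fin n → ℝ) (i : Fin n) :
    0 ≤ ((if u i ≤ T n g u then (1:ℝ) else 0) - T n g u) / T n g u + 1 := by
  rcases eq_or_lt_of_le (T_nonneg u) with h0 | hpos
  · rw [← h0]
    simp
  · have hb : (0:ℝ) ≤ if u i ≤ T n g u then (1:ℝ) else 0 := by split <;> norm_num
    have h1 : (-(T n g u)) / T n g u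
        ≤ ((if u i ≤ T n g u then (1:ℝ) else 0) - T n g u) / T n g u :=
      div_le_div_of_nonneg_right (by linarith) (le_of_lt hpos)
    have h2 : (-(T n g u)) / T n g u = -1 := by
      rw [neg_div, div_self (ne_of_gt hpos)]
    linarith

lemma sum_eq (u : Fin n → ℝ) :
    ((N n u (T n g u) : ℝ) - n * T n g u) / T n g u + n
      = ∑ i, (((if u i ≤ T n g u then (1:ℝ) else 0) - T n g u) / T n g u + 1) := by
  rw [Finset.sum_add_distrib, ← Finset.sum_div, Finset.sum_sub_distrib, ← N_cast_sum]
  simp [Finset.card_univ, mul_comm]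

lemma F_add_nonneg (u : Fin n → ℝ) :
    0 ≤ ((N n u (T n g u) : ℝ) - n * T n g u) / T n g u + n := by
  rw [sum_eq (g := g)]
  exact Finset.sum_nonneg (fun i _ => term_nonneg u i)

lemma sum_repr (u : Fin n → ℝ) :
    ENNReal.ofReal (((N n u (T n g u) : ℝ) - n * T n g u) / T n g u + n)
      = ∑ i, Phii n g i u := by
  rw [sum_eq (g := g), ENNReal.ofReal_sum_of_nonneg (fun i _ => term_nonneg u i)]
  rfl

lemma total :
    ∫⁻ u, (∑ i, Phii n g i u) ∂(Measure.pi fun _ : Fin n => nu) ≤ (n : ℝ≥0∞) := by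
  rw [lintegral_finset_sum _ (fun i _ => Phii_measurable i)]
  calc ∑ i : Fin n, ∫⁻ u, Phii n g i u ∂(Measure.pi fun _ : Fin n => nu)
      ≤ ∑ _i : Fin n, (1:ℝ≥0∞) := Finset.sum_le_sum (fun i _ => pi_bound i)
    _ = (n : ℝ≥0∞) := by simp

end SR

/-- For the counting process `a_t` of `n₀` i.i.d. Uniform[0,1] random
variables, `â_t = a_t - n₀ t`, an arbitrary deterministic function `g` with `g 0 ≥ 0`,
and the stopping time `τ = inf{t ∈ (0,1] : â_t ≤ g t}` (with `inf ∅ = 1`, so that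
`τ > 0`), one has `E[â_τ / τ] ≤ 0`. -/
theorem expectation_stopped_ratio_nonpos
    {Ω : Type*} [m0 : MeasurableSpace Ω] (μ : Measure Ω) [IsProbabilityMeasure μ]
    (n₀ : ℕ) (U : Fin n₀ → Ω → ℝ)
    (hmeas : ∀ i, Measurable (U i))
    (hiid : iIndepFun U μ)
    (hunif : ∀ i, Measure.map (U i) μ = volume.restrict (Set.Icc (0:ℝ) 1))
    (a : ℝ → Ω → ℕ)
    (ha : ∀ t ω, a t ω = (Finset.univ.filter (fun i => U i ω ≤ t)).card)
    (g : ℝ → ℝ) (hg0 : 0 ≤ g 0)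
    (τ : Ω → ℝ)
    (hτ : ∀ ω, τ ω
      = sInf ({t ∈ Set.Ioc (0:ℝ) 1 | (a t ω : ℝ) - n₀ * t ≤ g t} ∪ {1}))
    (hτpos : ∀ᵐ ω ∂μ, 0 < τ ω) :
    ∫ ω, ((a (τ ω) ω : ℝ) - n₀ * τ ω) / τ ω ∂μ ≤ 0 := by
  classical
  set V : Ω → (Fin n₀ → ℝ) := fun ω i => U i ω with hV_def
  have hV : Measurable V := measurable_pi_lambda _ (fun i => hmeas i)
  have hτT : ∀ ω, τ ω = SR.T n₀ g (V ω) := by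
    intro ω
    rw [hτ]
    unfold SR.T SR.S
    congr 1
    have haN : ∀ t, a t ω = SR.N n₀ (V ω) t := fun t => by rw [ha]; rfl
    ext t
    simp only [Set.mem_union, Set.mem_setOf_eq, Set.mem_singleton_iff]
    constructor
    · rintro (⟨h1, h2⟩ | h)
      · exact Or.inl ⟨h1, by rw [← haN]; exact h2⟩
      · exact Or.inr h
    · rintro (⟨h1, h2⟩ | h)
      · exact Or.inl ⟨h1, by rw [haN]; exact h2⟩
      · exact Or.inr h
  have haT : ∀ ω, (a (τ ω) ω : ℕ) = SR.N n₀ (V ω) (SR.T n₀ g (V ω)) := by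
    intro ω
    rw [ha, hτT ω]
    rfl
  set f : Ω → ℝ := fun ω => ((a (τ ω) ω : ℝ) - n₀ * τ ω) / τ ω with hf_def
  have hfF : ∀ ω, f ω
      = ((SR.N n₀ (V ω) (SR.T n₀ g (V ω)) : ℝ) - n₀ * SR.T n₀ g (V ω)) / SR.T n₀ g (V ω) := by
    intro ω
    simp only [hf_def]
    rw [haT ω, hτT ω]
  by_cases hInt : Integrable f μ
  · -- the map of V is the product of uniforms
    have hmap : Measure.map V μ = Measure.pi (fun _ : Fin n₀ => SR.nu) := by
      symm
      apply Measure.pi_eq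
      intro s hs
      rw [Measure.map_apply hV (MeasurableSet.univ_pi hs)]
      have hpre : V ⁻¹' (Set.univ.pi s) = ⋂ i, U i ⁻¹' (s i) := by
        ext ω
        simp [hV_def, Set.mem_pi]
      rw [hpre, show (⋂ i, U i ⁻¹' (s i)) = ⋂ i ∈ Finset.univ, U i ⁻¹' (s i) by simp]
      rw [(iIndepFun_iff_measure_inter_preimage_eq_mul.mp hiid) Finset.univ (fun i _ => hs i)]
      refine Finset.prod_congr rfl (fun i _ => ?_)
      calc μ (U i ⁻¹' s i) = Measure.map (U i) μ (s i) :=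
            (Measure.map_apply (hmeas i) (hs i)).symm
        _ = SR.nu (s i) := by rw [hunif i]; rfl
    have hkey : ∫⁻ ω, ENNReal.ofReal (f ω + n₀) ∂μ ≤ (n₀ : ℝ≥0∞) := by
      calc ∫⁻ ω, ENNReal.ofReal (f ω + n₀) ∂μ
          = ∫⁻ ω, (∑ i, SR.Phii n₀ g i (V ω)) ∂μ := by
            apply lintegral_congr
            intro ω
            rw [hfF ω, SR.sum_repr]
        _ = ∫⁻ u, (∑ i, SR.Phii n₀ g i u) ∂(Measure.map V μ) :=
            (lintegral_map (Finset.measurable_sum _ (fun i _ => SR.Phii_measurable i)) hV).symm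
        _ = ∫⁻ u, (∑ i, SR.Phii n₀ g i u) ∂(Measure.pi fun _ : Fin n₀ => SR.nu) := by
            rw [hmap]
        _ ≤ (n₀ : ℝ≥0∞) := SR.total
    have hfb : ∀ᵐ ω ∂μ, 0 ≤ f ω + n₀ :=
      Filter.Eventually.of_forall (fun ω => by rw [hfF ω]; exact SR.F_add_nonneg _)
    have hIntfn : Integrable (fun ω => f ω + n₀) μ := hInt.add (integrable_const _)
    have h3 : ∫ ω, (f ω + n₀) ∂μ = (∫⁻ ω, ENNReal.ofReal (f ω + n₀) ∂μ).toReal :=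
      integral_eq_lintegral_of_nonneg_ae hfb hIntfn.aestronglyMeasurable
    have h4 : (∫⁻ ω, ENNReal.ofReal (f ω + n₀) ∂μ).toReal ≤ (n₀ : ℝ) := by
      have := ENNReal.toReal_mono (by simp) hkey
      simpa using this
    have h5 : ∫ ω, (f ω + n₀) ∂μ = ∫ ω, f ω ∂μ + n₀ := by
      rw [integral_add hInt (integrable_const _), integral_const]
      simp
    have h6 : ∫ ω, f ω ∂μ + (n₀:ℝ) ≤ n₀ := by
      rw [← h5, h3]
      exact h4
    linarith
  · rw [integral_undef hInt]
end

section
/- Under independence of null p-values from all other p-values, the step-down Benjamini–Hochberg procedure with threshold τ_sd = inf{t : r_t ≤ nt/q} controls the FDR: E[a_{τ_sd}/(r_{τ_sd} ∨ 1)] ≤ (n₀/n) q ≤ q, where a_t and r_t count null and total p-values at most t. -/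
open MeasureTheory Set ProbabilityTheory


namespace SDBH

variable {n : ℕ}

noncomputable def cnt (y : Fin n → ℝ) (t : ℝ) : ℕ :=
  (Finset.univ.filter fun j => y j ≤ t).card

def thrSet (n : ℕ) (q : ℝ) (y : Fin n → ℝ) : Set ℝ :=
  {t ∈ Set.Icc (0:ℝ) 1 | (cnt y t : ℝ) ≤ n * t / q}

noncomputable def thr (n : ℕ) (q : ℝ) (y : Fin n → ℝ) : ℝ := sInf (thrSet n q y)

lemma cnt_mono (y : Fin n → ℝ) {s t : ℝ} (h : s ≤ t) : cnt y s ≤ cnt y t := by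
  apply Finset.card_le_card
  intro j hj
  simp only [Finset.mem_filter, Finset.mem_univ, true_and] at hj ⊢
  exact hj.trans h

lemma cnt_le (y : Fin n → ℝ) (t : ℝ) : cnt y t ≤ n := by
  simpa [cnt] using (Finset.card_filter_le Finset.univ fun j => y j ≤ t)

variable {q : ℝ} (hq : q ∈ Set.Ioo (0:ℝ) 1)

include hq in
lemma q_mem_thrSet (y : Fin n → ℝ) : q ∈ thrSet n q y := by
  refine ⟨⟨hq.1.le, hq.2.le⟩, ?_⟩
  rw [mul_div_assoc, div_self hq.1.ne', mul_one]
  exact_mod_cast cnt_le y q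

include hq in
lemma thrSet_nonempty (y : Fin n → ℝ) : (thrSet n q y).Nonempty := ⟨q, q_mem_thrSet hq y⟩

lemma thrSet_bddBelow (y : Fin n → ℝ) : BddBelow (thrSet n q y) :=
  ⟨0, fun t ht => ht.1.1⟩

include hq in
lemma thr_nonneg (y : Fin n → ℝ) : 0 ≤ thr n q y :=
  le_csInf (thrSet_nonempty hq y) (fun t ht => ht.1.1)

include hq in
lemma thr_le_q (y : Fin n → ℝ) : thr n q y ≤ q :=
  csInf_le (thrSet_bddBelow y) (q_mem_thrSet hq y)

lemma thr_le_of_mem {y : Fin n → ℝ} {t : ℝ} (ht : t ∈ thrSet n q y) : thr n q y ≤ t :=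
  csInf_le (thrSet_bddBelow y) ht

include hq in
/-- The infimum is attained: `thr ∈ thrSet`. -/
lemma thr_mem (hn : 0 < n) (y : Fin n → ℝ) : thr n q y ∈ thrSet n q y := by
  have hq0 : q ≠ 0 := ne_of_gt hq.1
  set τ := thr n q y with hτdef
  have hτ01 : τ ∈ Set.Icc (0:ℝ) 1 :=
    ⟨thr_nonneg hq y, (thr_le_q hq y).trans hq.2.le⟩
  refine ⟨hτ01, ?_⟩
  by_contra hcon
  push_neg at hcon
  classical
  set A : Finset (Fin n) := Finset.univ.filter (fun j => τ < y j) with hA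
  have hgap : ∃ δ : ℝ, 0 < δ ∧ ∀ t, τ ≤ t → t < τ + δ → cnt y t = cnt y τ := by
    have key : ∀ δ : ℝ, (∀ j, τ < y j → τ + δ ≤ y j) → ∀ t, τ ≤ t → t < τ + δ →
        cnt y t = cnt y τ := by
      intro δ hsep t ht1 ht2
      unfold cnt
      congr 1
      apply Finset.filter_congr
      intro j _
      constructor
      · intro hjt
        by_contra hjτ
        push_neg at hjτ
        exact absurd hjt (by push_neg; linarith [hsep j hjτ])
      · intro h2; exact h2.trans ht1
    by_cases h : A.Nonempty
    · obtain ⟨b, hbA, hb⟩ := Finset.exists_mem_eq_inf' h y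
      refine ⟨A.inf' h y - τ, ?_, key _ ?_⟩
      · have : τ < y b := (Finset.mem_filter.mp hbA).2
        rw [hb]; linarith
      · intro j hj
        have hjA : j ∈ A := Finset.mem_filter.mpr ⟨Finset.mem_univ _, hj⟩
        have := Finset.inf'_le y hjA
        linarith
    · refine ⟨1, one_pos, key _ ?_⟩
      intro j hj
      exact absurd ⟨j, Finset.mem_filter.mpr ⟨Finset.mem_univ _, hj⟩⟩ h
  obtain ⟨δ, hδpos, hδ⟩ := hgap
  have hnpos : (0:ℝ) < n := Nat.cast_pos.mpr hn
  have hn0 : (n:ℝ) ≠ 0 := ne_of_gt hnpos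
  have hcnt : (n:ℝ) * τ / q < cnt y τ := hcon
  set ε : ℝ := q * (cnt y τ) / n - τ with hε
  have hεpos : 0 < ε := by
    rw [hε, sub_pos, lt_div_iff₀ hnpos]
    have h1 : (n:ℝ) * τ < cnt y τ * q := (div_lt_iff₀ hq.1).mp hcnt
    nlinarith
  obtain ⟨t, htS, htlt⟩ := exists_lt_of_csInf_lt (thrSet_nonempty hq y)
      (show sInf (thrSet n q y) < τ + min δ ε by
        have h0 : sInf (thrSet n q y) = τ := rfl
        have := lt_min hδpos hεpos
        linarith)
  have hτt : τ ≤ t := thr_le_of_mem htS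
  have hcnteq : cnt y t = cnt y τ :=
    hδ t hτt (htlt.trans_le (by linarith [min_le_left δ ε]))
  have h2 : (cnt y τ : ℝ) ≤ n * t / q := by rw [← hcnteq]; exact htS.2
  have h3 : (cnt y τ : ℝ) < n * (τ + ε) / q := by
    refine h2.trans_lt ?_
    have htε : t < τ + ε := htlt.trans_le (by linarith [min_le_right δ ε])
    gcongr
    exact hq.1
  have h4 : (n:ℝ) * (τ + ε) / q = cnt y τ := by
    rw [hε]
    field_simp
    ring
  rw [h4] at h3
  exact lt_irrefl _ h3

include hq in
lemma le_cnt_thr (hn : 0 < n) {y : Fin n → ℝ} (hpos : 0 < thr n q y) :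
    (n:ℝ) * thr n q y / q ≤ cnt y (thr n q y) := by
  have hq0 : q ≠ 0 := ne_of_gt hq.1
  set τ := thr n q y with hτdef
  by_contra hcon
  push_neg at hcon
  have hnpos : (0:ℝ) < n := Nat.cast_pos.mpr hn
  have hn0 : (n:ℝ) ≠ 0 := ne_of_gt hnpos
  set s : ℝ := q * cnt y τ / n with hs
  have hs0 : 0 ≤ s := by
    have h1 := hq.1
    positivity
  have hsτ : s < τ := by
    rw [hs, div_lt_iff₀ hnpos]
    have := (lt_div_iff₀ hq.1).mp hcon
    nlinarith
  have hsS : s ∈ thrSet n q y := by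
    refine ⟨⟨hs0, hsτ.le.trans ((thr_le_q hq y).trans hq.2.le)⟩, ?_⟩
    have h1 : cnt y s ≤ cnt y τ := cnt_mono y hsτ.le
    have h2 : (n:ℝ) * s / q = cnt y τ := by rw [hs]; field_simp
    rw [h2]
    exact_mod_cast h1
  exact absurd (thr_le_of_mem hsS) (not_le.mpr hsτ)

include hq in
/-- If at least one value is counted at the threshold, the threshold equals
`q * cnt / n`. -/
lemma thr_eq (hn : 0 < n) {y : Fin n → ℝ} (h1 : 1 ≤ cnt y (thr n q y)) :
    thr n q y = q * cnt y (thr n q y) / n := by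
  have hq0 : q ≠ 0 := ne_of_gt hq.1
  have hnpos : (0:ℝ) < n := Nat.cast_pos.mpr hn
  have hn0 : (n:ℝ) ≠ 0 := ne_of_gt hnpos
  have hmem := thr_mem hq hn y
  have hub : (cnt y (thr n q y) : ℝ) ≤ n * thr n q y / q := hmem.2
  have hpos : 0 < thr n q y := by
    rcases (thr_nonneg hq y).lt_or_eq with h | h
    · exact h
    · exfalso
      rw [← h] at hub h1
      simp only [mul_zero, zero_div] at hub
      have : (1:ℝ) ≤ (cnt y 0 : ℝ) := by exact_mod_cast h1
      linarith
  have hlb := le_cnt_thr hq hn hpos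
  have heq : (cnt y (thr n q y) : ℝ) = n * thr n q y / q := le_antisymm hub hlb
  rw [heq]
  field_simp

include hq in
lemma thr_char {y : Fin n → ℝ} {k : ℕ} (hn : 0 < n) (h : thr n q y = q * k / n) :
    q * k / n ∈ thrSet n q y ∧ ∀ j < k, q * j / n ∉ thrSet n q y := by
  have hnpos : (0:ℝ) < n := Nat.cast_pos.mpr hn
  constructor
  · rw [← h]; exact thr_mem hq hn y
  · intro j hj hmem
    have hle := thr_le_of_mem hmem
    rw [h] at hle
    have hjk : (j:ℝ) < k := by exact_mod_cast hj
    have hlt : q * (j:ℝ) / n < q * k / n := by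
      gcongr
      exact hq.1
    linarith

include hq in
/-- Leave-one-out stability: if `0 < y i ≤ thr y` then setting `y i` to `0`
does not change the threshold. -/
lemma thr_update (hn : 0 < n) {y : Fin n → ℝ} {i : Fin n}
    (h0 : 0 < y i) (hle : y i ≤ thr n q y) :
    thr n q (Function.update y i 0) = thr n q y := by
  classical
  set τ := thr n q y with hτdef
  set y' := Function.update y i 0 with hy'
  have hcnt_ge : ∀ t : ℝ, y i ≤ t → cnt y' t = cnt y t := by
    intro t ht
    unfold cnt
    congr 1
    apply Finset.filter_congr
    intro j _
    by_cases hji : j = i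
    · subst hji
      rw [hy', Function.update_self]
      constructor
      · intro _; exact ht
      · intro _; linarith
    · rw [hy', Function.update_of_ne hji]
  have hcnt_lt : ∀ t : ℝ, 0 ≤ t → t < y i → cnt y' t = cnt y t + 1 := by
    intro t ht0 htlt
    unfold cnt
    have hfe : (Finset.univ.filter fun j => y' j ≤ t) =
        insert i (Finset.univ.filter fun j => y j ≤ t) := by
      ext j
      simp only [Finset.mem_filter, Finset.mem_insert, Finset.mem_univ, true_and, hy']
      by_cases hji : j = i
      · subst hji
        rw [Function.update_self]
        constructor
        · intro _; exact Or.inl rfl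
        · intro _; exact ht0
      · rw [Function.update_of_ne hji]
        constructor
        · exact Or.inr
        · rintro (h | h)
          · exact absurd h hji
          · exact h
    rw [hfe, Finset.card_insert_of_notMem (by
      simp only [Finset.mem_filter, Finset.mem_univ, true_and, not_le]; exact htlt)]
  apply le_antisymm
  · apply thr_le_of_mem
    have hmem := thr_mem hq hn y
    exact ⟨hmem.1, by rw [hcnt_ge τ hle]; exact hmem.2⟩
  · have hmem' := thr_mem hq hn y'
    set t' := thr n q y' with ht'def
    by_cases hcase : y i ≤ t'
    · apply thr_le_of_mem
      exact ⟨hmem'.1, by rw [← hcnt_ge t' hcase]; exact hmem'.2⟩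
    · exfalso
      push_neg at hcase
      have h01 : t' ∈ Set.Icc (0:ℝ) 1 := hmem'.1
      have hc := hmem'.2
      rw [hcnt_lt t' h01.1 hcase] at hc
      push_cast at hc
      have htS : t' ∈ thrSet n q y := ⟨h01, by linarith⟩
      have := thr_le_of_mem htS
      linarith
end SDBH


namespace SDBH

lemma indep_sup_right {Ω : Type*} {m0 : MeasurableSpace Ω} {μ : Measure Ω}
    [IsProbabilityMeasure μ]
    {m1 m2 m3 : MeasurableSpace Ω} (h1 : m1 ≤ m0) (h2 : m2 ≤ m0) (h3 : m3 ≤ m0)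
    (h12 : Indep m1 m2 μ) (h123 : Indep (m1 ⊔ m2) m3 μ) :
    Indep m1 (m2 ⊔ m3) μ := by
  have hgen : m2 ⊔ m3 = MeasurableSpace.generateFrom
      {s | ∃ s2, MeasurableSet[m2] s2 ∧ ∃ s3, MeasurableSet[m3] s3 ∧ s = s2 ∩ s3} := by
    apply le_antisymm
    · apply sup_le
      · intro s hs
        exact MeasurableSpace.measurableSet_generateFrom
          ⟨s, hs, Set.univ, MeasurableSet.univ, (Set.inter_univ s).symm⟩
      · intro s hs
        exact MeasurableSpace.measurableSet_generateFrom
          ⟨Set.univ, MeasurableSet.univ, s, hs, (Set.univ_inter s).symm⟩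
    · rw [MeasurableSpace.generateFrom_le_iff]
      rintro s ⟨s2, hs2, s3, hs3, rfl⟩
      exact ((le_sup_left : m2 ≤ m2 ⊔ m3) _ hs2).inter ((le_sup_right : m3 ≤ m2 ⊔ m3) _ hs3)
  have hpi2 : IsPiSystem {s | ∃ s2, MeasurableSet[m2] s2 ∧ ∃ s3, MeasurableSet[m3] s3 ∧
      s = s2 ∩ s3} := by
    rintro s ⟨s2, hs2, s3, hs3, rfl⟩ t ⟨t2, ht2, t3, ht3, rfl⟩ -
    exact ⟨s2 ∩ t2, hs2.inter ht2, s3 ∩ t3, hs3.inter ht3, by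
      rw [Set.inter_inter_inter_comm]⟩
  refine IndepSets.indep h1 (sup_le h2 h3) (@MeasurableSpace.isPiSystem_measurableSet Ω m1) hpi2
    (@MeasurableSpace.generateFrom_measurableSet Ω m1).symm hgen ?_
  rw [IndepSets_iff]
  rintro A s hA ⟨B, hB, C, hC, rfl⟩
  have h123' := (Indep_iff _ _ _).mp h123
  have h12' := (Indep_iff _ _ _).mp h12
  have hAB : MeasurableSet[m1 ⊔ m2] (A ∩ B) :=
    ((le_sup_left : m1 ≤ m1 ⊔ m2) _ hA).inter ((le_sup_right : m2 ≤ m1 ⊔ m2) _ hB)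
  have e1 : μ (A ∩ (B ∩ C)) = μ (A ∩ B) * μ C := by
    rw [← Set.inter_assoc]
    exact h123' (A ∩ B) C hAB hC
  have e2 : μ (A ∩ B) = μ A * μ B := h12' A B hA hB
  have e3 : μ (B ∩ C) = μ B * μ C :=
    h123' B C ((le_sup_right : m2 ≤ m1 ⊔ m2) _ hB) hC
  rw [e1, e2, e3, mul_assoc]

end SDBH

namespace SDBH

variable {Ω : Type*}

def upd {n : ℕ} (p : Fin n → Ω → ℝ) (i : Fin n) (ω : Ω) : Fin n → ℝ :=
  Function.update (fun j => p j ω) i 0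

def Bset (n : ℕ) (q : ℝ) (p : Fin n → Ω → ℝ) (i : Fin n) (k : ℕ) : Set Ω :=
  {ω | q * k / n ∈ thrSet n q (upd p i ω)} ∩
    ⋂ j ∈ Finset.range k, {ω | q * j / n ∈ thrSet n q (upd p i ω)}ᶜ

lemma mem_Bset {n : ℕ} {q : ℝ} (hq : q ∈ Set.Ioo (0:ℝ) 1) (hn : 0 < n)
    {p : Fin n → Ω → ℝ} {i : Fin n} {k : ℕ} {ω : Ω}
    (h : thr n q (upd p i ω) = q * k / n) : ω ∈ Bset n q p i k := by
  obtain ⟨h1, h2⟩ := thr_char hq hn h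
  refine ⟨h1, ?_⟩
  simp only [Set.mem_iInter, Set.mem_compl_iff, Finset.mem_range]
  intro j hj
  exact h2 j hj

lemma Bset_disjoint {n : ℕ} {q : ℝ} {p : Fin n → Ω → ℝ} {i : Fin n} {k k' : ℕ}
    (h : k < k') : Disjoint (Bset n q p i k) (Bset n q p i k') := by
  rw [Set.disjoint_left]
  rintro ω ⟨h1, _⟩ ⟨_, h2⟩
  simp only [Set.mem_iInter, Set.mem_compl_iff, Finset.mem_range] at h2
  exact h2 k h h1

lemma meas_cnt_vec {ι : Type*} [Fintype ι] (c : ℝ) :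
    Measurable fun v : ι → ℝ => (Finset.univ.filter fun j => v j ≤ c).card := by
  classical
  simp_rw [Finset.card_filter]
  apply Finset.measurable_sum
  intro j _
  exact Measurable.ite (measurableSet_le (measurable_pi_apply j) measurable_const)
    measurable_const measurable_const

lemma cnt_upd_split {n : ℕ} (p : Fin n → Ω → ℝ) (nulls : Finset (Fin n)) {i : Fin n}
    (hi : i ∈ nulls) (t : ℝ) (ω : Ω) :
    cnt (upd p i ω) t =
      ((if (0:ℝ) ≤ t then 1 else 0)
      + (Finset.univ.filter fun j : ((Finset.univ.erase (⟨i, hi⟩ : {x // x ∈ nulls})) :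
          Finset {x // x ∈ nulls}) => p j.1.1 ω ≤ t).card)
      + (Finset.univ.filter fun j : {j : Fin n // j ∉ nulls} => p j.1 ω ≤ t).card := by
  classical
  have e1 : ((Finset.univ.erase i).filter (· ∈ nulls)) = nulls.erase i := by
    ext j
    simp only [Finset.mem_filter, Finset.mem_erase, Finset.mem_univ, true_and, and_true]
  have e2 : ((Finset.univ.erase i).filter (· ∉ nulls)) = Finset.univ.filter (· ∉ nulls) := by
    ext j
    simp only [Finset.mem_filter, Finset.mem_erase, Finset.mem_univ, true_and, and_true]
    constructor
    · exact fun h => h.2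
    · exact fun h => ⟨fun e => h (e.symm ▸ hi), h⟩
  have e3 : ∑ j ∈ nulls.erase i, (if p j ω ≤ t then 1 else 0)
      = (Finset.univ.filter fun j : ((Finset.univ.erase (⟨i, hi⟩ : {x // x ∈ nulls})) :
          Finset {x // x ∈ nulls}) => p j.1.1 ω ≤ t).card := by
    rw [Finset.card_filter]
    rw [Finset.sum_coe_sort (Finset.univ.erase (⟨i, hi⟩ : {x // x ∈ nulls}))
      (fun x : {x // x ∈ nulls} => if p x.1 ω ≤ t then (1:ℕ) else 0)]
    refine Finset.sum_bij' (fun (j : Fin n) (hj : j ∈ nulls.erase i) =>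
        (⟨j, (Finset.mem_erase.mp hj).2⟩ : {x // x ∈ nulls}))
      (fun j _ => j.1) ?_ ?_ ?_ ?_ ?_
    · intro a ha
      simp only [Finset.mem_erase, Finset.mem_univ, and_true]
      intro hcon
      exact (Finset.mem_erase.mp ha).1 (by simpa using congrArg Subtype.val hcon)
    · intro a ha
      simp only [Finset.mem_erase] at ha ⊢
      exact ⟨fun e => ha.1 (Subtype.ext e), a.2⟩
    · intro a ha; rfl
    · intro a ha; rfl
    · intro a ha; rfl
  have e4 : ∑ j ∈ Finset.univ.filter (· ∉ nulls), (if p j ω ≤ t then 1 else 0)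
      = (Finset.univ.filter fun j : {j : Fin n // j ∉ nulls} => p j.1 ω ≤ t).card := by
    rw [Finset.card_filter]
    rw [Finset.sum_subtype (p := fun j => j ∉ nulls) (Finset.univ.filter (· ∉ nulls))
      (fun x => by simp) (fun j => if p j ω ≤ t then (1:ℕ) else 0)]
  rw [← e3, ← e4, ← e1, ← e2]
  unfold cnt upd
  rw [Finset.card_filter]
  rw [← Finset.add_sum_erase _ _ (Finset.mem_univ i)]
  rw [Function.update_self]
  have e5 : ∑ j ∈ Finset.univ.erase i, (if Function.update (fun j' => p j' ω) i 0 j ≤ t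
      then (1:ℕ) else 0) = ∑ j ∈ Finset.univ.erase i, (if p j ω ≤ t then (1:ℕ) else 0) := by
    refine Finset.sum_congr rfl (fun j hj => ?_)
    rw [Function.update_of_ne (Finset.ne_of_mem_erase hj)]
  rw [e5, ← Finset.sum_filter_add_sum_filter_not (Finset.univ.erase i) (· ∈ nulls)]
  ring

end SDBH

namespace SDBH

lemma key_indep {Ω : Type*} [m0 : MeasurableSpace Ω] (μ : Measure Ω) [IsProbabilityMeasure μ]
    {n : ℕ} (nulls : Finset (Fin n)) (p : Fin n → Ω → ℝ) (hmeas : ∀ i, Measurable (p i))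
    (hiid : iIndepFun (fun i : {i // i ∈ nulls} => p i) μ)
    (hindep : IndepFun (fun ω (i : {i // i ∈ nulls}) => p i ω)
      (fun ω (j : {j // j ∉ nulls}) => p j ω) μ)
    (q : ℝ) {i : Fin n} (hi : i ∈ nulls) (k : ℕ) :
    MeasurableSet (Bset n q p i k) ∧
      ∀ s : Set ℝ, MeasurableSet s →
        μ ((p i ⁻¹' s) ∩ Bset n q p i k) = μ (p i ⁻¹' s) * μ (Bset n q p i k) := by
  classical
  set i₀ : {x // x ∈ nulls} := ⟨i, hi⟩ with hi₀
  set T : Finset {x // x ∈ nulls} := Finset.univ.erase i₀ with hT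
  set Tt : Ω → ({x // x ∈ T} → ℝ) := fun ω j => p j.1.1 ω with hTt
  set M : Ω → ({j // j ∉ nulls} → ℝ) := fun ω j => p j.1 ω with hM
  have hTtmeas : Measurable Tt := measurable_pi_lambda _ (fun j => hmeas _)
  have hMmeas : Measurable M := measurable_pi_lambda _ (fun j => hmeas _)
  set m1 : MeasurableSpace Ω := MeasurableSpace.comap (p i) inferInstance with hm1
  set m2 : MeasurableSpace Ω := MeasurableSpace.comap Tt inferInstance with hm2
  set m3 : MeasurableSpace Ω := MeasurableSpace.comap M inferInstance with hm3
  have hle1 : m1 ≤ m0 := (hmeas i).comap_le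
  have hle2 : m2 ≤ m0 := hTtmeas.comap_le
  have hle3 : m3 ≤ m0 := hMmeas.comap_le
  -- independence of p i and the other-null tuple
  have h12 : Indep m1 m2 μ := by
    have h := hiid.indepFun_finset {i₀} T (by simp [hT]) (fun j => hmeas j.1)
    have h2 := h.comp
      (φ := fun v : ({x // x ∈ ({i₀} : Finset {x // x ∈ nulls})} → ℝ) =>
        v ⟨i₀, Finset.mem_singleton_self i₀⟩)
      (ψ := id) (measurable_pi_apply _ : Measurable fun v : ({x // x ∈ ({i₀} : Finset {x // x ∈ nulls})} → ℝ) =>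
        v ⟨i₀, Finset.mem_singleton_self i₀⟩) measurable_id
    rw [IndepFun_iff_Indep] at h2
    exact h2
  -- independence of (p i, other nulls) and non-nulls
  have h123 : Indep (m1 ⊔ m2) m3 μ := by
    have h := hindep
    rw [IndepFun_iff_Indep] at h
    have hle : m1 ⊔ m2 ≤
        MeasurableSpace.comap (fun ω (x : {x // x ∈ nulls}) => p x.1 ω) inferInstance := by
      apply sup_le
      · have : p i = (fun v : ({x // x ∈ nulls} → ℝ) => v i₀) ∘
            (fun ω (x : {x // x ∈ nulls}) => p x.1 ω) := rfl
        rw [hm1, this, ← MeasurableSpace.comap_comp]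
        exact MeasurableSpace.comap_mono (measurable_pi_apply i₀).comap_le
      · have : Tt = (fun (v : {x // x ∈ nulls} → ℝ) (j : {x // x ∈ T}) => v j.1) ∘
            (fun ω (x : {x // x ∈ nulls}) => p x.1 ω) := rfl
        rw [hm2, this, ← MeasurableSpace.comap_comp]
        exact MeasurableSpace.comap_mono
          (measurable_pi_lambda _ (fun j => measurable_pi_apply j.1)).comap_le
    rw [Indep_iff] at h ⊢
    intro t1 t2 ht1 ht2
    exact h t1 t2 (hle _ ht1) ht2
  have hkey : Indep m1 (m2 ⊔ m3) μ := indep_sup_right hle1 hle2 hle3 h12 h123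
  -- measurability of the count function w.r.t. m2 ⊔ m3
  have hcntmeas : ∀ t : ℝ, Measurable[m2 ⊔ m3] (fun ω => (cnt (upd p i ω) t : ℕ)) := by
    intro t
    have hrw : (fun ω => cnt (upd p i ω) t) = fun ω =>
        (((if (0:ℝ) ≤ t then 1 else 0)
          + (Finset.univ.filter fun j : {x // x ∈ T} => Tt ω j ≤ t).card)
          + (Finset.univ.filter fun j : {j // j ∉ nulls} => M ω j ≤ t).card) := by
      funext ω
      exact cnt_upd_split p nulls hi t ω
    rw [hrw]
    apply Measurable.add
    · apply Measurable.add measurable_const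
      exact ((meas_cnt_vec t).comp (comap_measurable Tt)).mono
        le_sup_left le_rfl
    · exact ((meas_cnt_vec t).comp (comap_measurable M)).mono
        le_sup_right le_rfl
  have hDmeas : ∀ c : ℝ, MeasurableSet[m2 ⊔ m3] {ω | c ∈ thrSet n q (upd p i ω)} := by
    intro c
    by_cases hc : c ∈ Set.Icc (0:ℝ) 1
    · have hrw : {ω | c ∈ thrSet n q (upd p i ω)}
          = (fun ω => cnt (upd p i ω) c) ⁻¹' {m : ℕ | (m:ℝ) ≤ n * c / q} := by
        ext ω
        simp only [thrSet, Set.mem_setOf_eq, Set.mem_preimage, Set.mem_sep_iff, hc, true_and]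
      rw [hrw]
      exact hcntmeas c ((Set.to_countable _).measurableSet)
    · have hrw : {ω | c ∈ thrSet n q (upd p i ω)} = ∅ := by
        ext ω
        simp only [thrSet, Set.mem_setOf_eq, Set.mem_sep_iff, hc, false_and,
          Set.mem_empty_iff_false]
      rw [hrw]
      exact @MeasurableSet.empty Ω (m2 ⊔ m3)
  have hB23 : MeasurableSet[m2 ⊔ m3] (Bset n q p i k) := by
    unfold Bset
    apply (hDmeas _).inter
    apply MeasurableSet.biInter (Set.to_countable _)
    exact fun j _ => (hDmeas _).compl
  constructor
  · exact (sup_le hle2 hle3) _ hB23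
  · intro s hs
    have h1 : MeasurableSet[m1] (p i ⁻¹' s) := ⟨s, hs, rfl⟩
    exact ((Indep_iff _ _ _).mp hkey) _ _ h1 hB23

end SDBH

/-- Step-down Benjamini–Hochberg FDR control. Null p-values are i.i.d.
Uniform[0,1], independent of the non-null p-values. With `a_t`, `b_t`, `r_t = a_t + b_t`
counting null, non-null and all p-values at most `t`, and threshold
`τ_sd = inf{t : r_t ≤ n t / q}`, the step-down BH procedure satisfies
`E[a_{τ_sd} / (r_{τ_sd} ∨ 1)] ≤ (n₀/n) q ≤ q`. -/
theorem stepdown_BH_FDR_control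
    {Ω : Type*} [m0 : MeasurableSpace Ω] (μ : Measure Ω) [IsProbabilityMeasure μ]
    (n n₀ : ℕ) (hn : 0 < n)
    (nulls : Finset (Fin n)) (hcard : nulls.card = n₀)
    (p : Fin n → Ω → ℝ) (hmeas : ∀ i, Measurable (p i))
    (hiid : iIndepFun (fun i : {i // i ∈ nulls} => p i) μ)
    (hunif : ∀ i ∈ nulls, Measure.map (p i) μ = volume.restrict (Set.Icc (0:ℝ) 1))
    (hindep : IndepFun (fun ω (i : {i // i ∈ nulls}) => p i ω)
      (fun ω (j : {j // j ∉ nulls}) => p j ω) μ)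
    (q : ℝ) (hq : q ∈ Set.Ioo (0:ℝ) 1)
    (a r : ℝ → Ω → ℕ)
    (ha : ∀ t ω, a t ω = (nulls.filter (fun i => p i ω ≤ t)).card)
    (hr : ∀ t ω, r t ω = (Finset.univ.filter (fun i : Fin n => p i ω ≤ t)).card)
    (τ : Ω → ℝ)
    (hτ : ∀ ω, τ ω = sInf {t ∈ Set.Icc (0:ℝ) 1 | (r t ω : ℝ) ≤ n * t / q}) :
    ∫ ω, (a (τ ω) ω : ℝ) / (max (r (τ ω) ω) 1 : ℕ) ∂μ ≤ (n₀ / n : ℝ) * q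
      ∧ (n₀ / n : ℝ) * q ≤ q := by
  classical
  have hn' : (0:ℝ) < n := Nat.cast_pos.mpr hn
  have hn0 : (n:ℝ) ≠ 0 := ne_of_gt hn'
  have hq0 : (0:ℝ) < q := hq.1
  have hn₀n : (n₀ : ℝ) ≤ n := by
    rw [← hcard]
    exact_mod_cast (Finset.card_le_univ nulls).trans (by simp)
  have hsecond : (n₀ / n : ℝ) * q ≤ q := by
    have h1 : (n₀ / n : ℝ) ≤ 1 := by rw [div_le_one hn']; exact hn₀n
    have h2 : (0:ℝ) ≤ n₀ / n := by positivity
    nlinarith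
  refine ⟨?_, hsecond⟩
  -- identification with the abstract threshold
  set y : Ω → Fin n → ℝ := fun ω j => p j ω with hy
  have hrcnt : ∀ t ω, r t ω = SDBH.cnt (y ω) t := fun t ω => by rw [hr]; rfl
  have hτthr : ∀ ω, τ ω = SDBH.thr n q (y ω) := by
    intro ω
    rw [hτ]
    unfold SDBH.thr SDBH.thrSet
    congr 1
    ext t
    simp only [Set.mem_setOf_eq, hrcnt]
  -- the dominating function
  set G : Fin n → ℕ → Ω → ℝ := fun i k =>
    Set.indicator ((p i ⁻¹' Set.Iic (q * k / n)) ∩ SDBH.Bset n q p i k)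
      (fun _ => (k : ℝ)⁻¹) with hG
  set g : Ω → ℝ := fun ω => ∑ i ∈ nulls, ∑ k ∈ Finset.Icc 1 n, G i k ω with hg
  have hGnonneg : ∀ i k ω, 0 ≤ G i k ω := by
    intro i k ω
    apply Set.indicator_nonneg
    intro x _
    positivity
  have hgnonneg : ∀ ω, 0 ≤ g ω :=
    fun ω => Finset.sum_nonneg fun i _ => Finset.sum_nonneg fun k _ => hGnonneg i k ω
  -- independence and measurability facts
  have hBkey : ∀ i ∈ nulls, ∀ k : ℕ, MeasurableSet (SDBH.Bset n q p i k) ∧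
      ∀ s : Set ℝ, MeasurableSet s →
        μ ((p i ⁻¹' s) ∩ SDBH.Bset n q p i k)
          = μ (p i ⁻¹' s) * μ (SDBH.Bset n q p i k) :=
    fun i hi k => SDBH.key_indep μ nulls p hmeas hiid hindep q hi k
  have hCB_meas : ∀ i ∈ nulls, ∀ k : ℕ,
      MeasurableSet ((p i ⁻¹' Set.Iic (q * k / n)) ∩ SDBH.Bset n q p i k) :=
    fun i hi k => ((hmeas i) measurableSet_Iic).inter (hBkey i hi k).1
  have hGint : ∀ i ∈ nulls, ∀ k : ℕ, Integrable (G i k) μ := by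
    intro i hi k
    rw [hG]
    rw [integrable_indicator_iff (hCB_meas i hi k)]
    exact integrableOn_const (measure_ne_top μ _)
  have hμC : ∀ (k : ℕ), k ∈ Finset.Icc 1 n → ∀ i ∈ nulls,
      μ (p i ⁻¹' Set.Iic (q * k / n)) = ENNReal.ofReal (q * k / n) := by
    intro k hk i hi
    obtain ⟨hk1, hkn⟩ := Finset.mem_Icc.mp hk
    have hkn' : (k:ℝ) ≤ n := Nat.cast_le.mpr hkn
    have hc0 : 0 ≤ q * k / n := by positivity
    have hc1 : q * k / n ≤ 1 := by
      rw [div_le_one hn']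
      nlinarith [hq.2.le]
    have h1 : μ (p i ⁻¹' Set.Iic (q * k / n))
        = Measure.map (p i) μ (Set.Iic (q * k / n)) :=
      (Measure.map_apply (hmeas i) measurableSet_Iic).symm
    rw [h1, hunif i hi, Measure.restrict_apply measurableSet_Iic]
    have h2 : Set.Iic (q * k / n) ∩ Set.Icc 0 1 = Set.Icc 0 (q * k / n) := by
      ext x
      simp only [Set.mem_inter_iff, Set.mem_Iic, Set.mem_Icc]
      constructor
      · rintro ⟨h3, h4, h5⟩; exact ⟨h4, h3⟩
      · rintro ⟨h3, h4⟩; exact ⟨h4, h3, h4.trans hc1⟩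
    rw [h2, Real.volume_Icc, sub_zero]
  -- the integral of g
  have hGint_val : ∀ (k : ℕ), k ∈ Finset.Icc 1 n → ∀ i ∈ nulls,
      ∫ ω, G i k ω ∂μ = (q / n) * (μ (SDBH.Bset n q p i k)).toReal := by
    intro k hk i hi
    obtain ⟨hk1, hkn⟩ := Finset.mem_Icc.mp hk
    have hk0 : (k:ℝ) ≠ 0 := by
      have : (0:ℕ) < k := hk1
      exact_mod_cast this.ne'
    rw [hG]
    rw [integral_indicator_const _ (hCB_meas i hi k)]
    rw [measureReal_def]
    rw [(hBkey i hi k).2 _ measurableSet_Iic, hμC k hk i hi]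
    rw [smul_eq_mul, ENNReal.toReal_mul, ENNReal.toReal_ofReal (by positivity)]
    field_simp
  have hBsum : ∀ i ∈ nulls,
      ∑ k ∈ Finset.Icc 1 n, (μ (SDBH.Bset n q p i k)).toReal ≤ 1 := by
    intro i hi
    have hdisj : Set.PairwiseDisjoint (↑(Finset.Icc 1 n)) (SDBH.Bset n q p i) := by
      intro k _ k' _ hne
      rcases lt_or_gt_of_ne hne with h | h
      · exact SDBH.Bset_disjoint h
      · exact (SDBH.Bset_disjoint h).symm
    have hsum : ∑ k ∈ Finset.Icc 1 n, μ (SDBH.Bset n q p i k)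
        = μ (⋃ k ∈ Finset.Icc 1 n, SDBH.Bset n q p i k) :=
      (measure_biUnion_finset hdisj (fun k _ => (hBkey i hi k).1)).symm
    rw [← ENNReal.toReal_sum (fun k _ => measure_ne_top μ _), hsum]
    have := prob_le_one (μ := μ) (s := ⋃ k ∈ Finset.Icc 1 n, SDBH.Bset n q p i k)
    exact ENNReal.toReal_le_of_le_ofReal one_pos.le (by simpa using this)
  have hgint : Integrable g μ := by
    rw [hg]
    apply integrable_finset_sum
    intro i hi
    apply integrable_finset_sum
    intro k _
    exact hGint i hi k
  have hgval : ∫ ω, g ω ∂μ ≤ (n₀ / n : ℝ) * q := by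
    rw [hg]
    rw [integral_finset_sum _ (fun i hi => integrable_finset_sum _ (fun k _ => hGint i hi k))]
    have hstep : ∀ i ∈ nulls, ∫ ω, (∑ k ∈ Finset.Icc 1 n, G i k ω) ∂μ ≤ q / n := by
      intro i hi
      rw [integral_finset_sum _ (fun k _ => hGint i hi k)]
      calc ∑ k ∈ Finset.Icc 1 n, ∫ ω, G i k ω ∂μ
          = ∑ k ∈ Finset.Icc 1 n, (q / n) * (μ (SDBH.Bset n q p i k)).toReal := by
            exact Finset.sum_congr rfl (fun k hk => hGint_val k hk i hi)
        _ = (q / n) * ∑ k ∈ Finset.Icc 1 n, (μ (SDBH.Bset n q p i k)).toReal := by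
            rw [Finset.mul_sum]
        _ ≤ (q / n) * 1 := by
            apply mul_le_mul_of_nonneg_left (hBsum i hi) (by positivity)
        _ = q / n := mul_one _
    calc ∑ i ∈ nulls, ∫ ω, (∑ k ∈ Finset.Icc 1 n, G i k ω) ∂μ
        ≤ ∑ _i ∈ nulls, q / n := Finset.sum_le_sum hstep
      _ = n₀ * (q / n) := by rw [Finset.sum_const, hcard, nsmul_eq_mul]
      _ = (n₀ / n : ℝ) * q := by ring
  -- a.e. positivity of null p-values
  have hae : ∀ᵐ ω ∂μ, ∀ i ∈ nulls, 0 < p i ω := by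
    have h1 : ∀ i ∈ nulls, ∀ᵐ ω ∂μ, 0 < p i ω := by
      intro i hi
      rw [ae_iff]
      have h2 : {ω | ¬ 0 < p i ω} = p i ⁻¹' Set.Iic 0 := by
        ext ω; simp [not_lt]
      rw [h2, ← Measure.map_apply (hmeas i) measurableSet_Iic, hunif i hi,
        Measure.restrict_apply measurableSet_Iic]
      have h3 : Set.Iic (0:ℝ) ∩ Set.Icc 0 1 = {0} := by
        ext x
        simp only [Set.mem_inter_iff, Set.mem_Iic, Set.mem_Icc, Set.mem_singleton_iff]
        constructor
        · rintro ⟨h4, h5, h6⟩; linarith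
        · rintro rfl; norm_num
      rw [h3, Real.volume_singleton]
    exact (ae_ball_iff (nulls : Set (Fin n)).to_countable).mpr h1
  -- pointwise bound
  have hpt : ∀ ω, (∀ i ∈ nulls, 0 < p i ω) →
      (a (τ ω) ω : ℝ) / ((max (r (τ ω) ω) 1 : ℕ) : ℝ) ≤ g ω := by
    intro ω hω
    by_cases hr0 : r (τ ω) ω = 0
    · have har : a (τ ω) ω ≤ r (τ ω) ω := by
        rw [ha, hr]
        apply Finset.card_le_card
        intro j hj
        rw [Finset.mem_filter] at hj ⊢
        exact ⟨Finset.mem_univ _, hj.2⟩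
      have ha0 : a (τ ω) ω = 0 := by omega
      rw [ha0]
      simp only [Nat.cast_zero, zero_div]
      exact hgnonneg ω
    · set k := r (τ ω) ω with hk
      have hk1 : 1 ≤ k := Nat.one_le_iff_ne_zero.mpr hr0
      have hkn : k ≤ n := by
        rw [hk, hrcnt]; exact SDBH.cnt_le _ _
      have hkIcc : k ∈ Finset.Icc 1 n := Finset.mem_Icc.mpr ⟨hk1, hkn⟩
      have hkcnt : SDBH.cnt (y ω) (SDBH.thr n q (y ω)) = k := by
        rw [hk, hrcnt, hτthr]
      have hτeq : τ ω = q * k / n := by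
        rw [hτthr, SDBH.thr_eq hq hn (by rw [hkcnt]; exact hk1), hkcnt]
      have hmax : max k 1 = k := max_eq_left hk1
      have hkpos : (0:ℝ) < k := by exact_mod_cast hk1
      -- expand a as a sum
      have haval : (a (τ ω) ω : ℝ) = ∑ i ∈ nulls, (if p i ω ≤ τ ω then (1:ℝ) else 0) := by
        rw [ha, Finset.card_filter]
        push_cast
        rfl
      rw [hmax, haval, Finset.sum_div]
      rw [hg]
      apply Finset.sum_le_sum
      intro i hi
      by_cases hpi : p i ω ≤ τ ω
      · have hupd : SDBH.thr n q (SDBH.upd p i ω) = q * k / n := by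
          have h5 : SDBH.upd p i ω = Function.update (y ω) i 0 := rfl
          rw [h5, SDBH.thr_update hq hn (hω i hi) (by rw [← hτthr]; exact hpi), ← hτthr, hτeq]
        have hmemB : ω ∈ SDBH.Bset n q p i k := SDBH.mem_Bset hq hn hupd
        have hmemC : ω ∈ p i ⁻¹' Set.Iic (q * k / n) := by
          simp only [Set.mem_preimage, Set.mem_Iic]
          rw [← hτeq]; exact hpi
        have hGik : G i k ω = (k:ℝ)⁻¹ := by
          rw [hG]
          exact Set.indicator_of_mem (Set.mem_inter hmemC hmemB) _
        rw [if_pos hpi]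
        calc (1:ℝ) / k = G i k ω := by rw [hGik, one_div]
          _ ≤ ∑ k' ∈ Finset.Icc 1 n, G i k' ω :=
              Finset.single_le_sum (fun k' _ => hGnonneg i k' ω) hkIcc
      · rw [if_neg hpi, zero_div]
        exact Finset.sum_nonneg fun k' _ => hGnonneg i k' ω
  -- conclude
  calc ∫ ω, (a (τ ω) ω : ℝ) / ((max (r (τ ω) ω) 1 : ℕ) : ℝ) ∂μ
      ≤ ∫ ω, g ω ∂μ := by
        apply integral_mono_of_nonneg
        · exact Filter.Eventually.of_forall (fun ω => by positivity)
        · exact hgint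
        · exact hae.mono (fun ω hω => hpt ω hω)
    _ ≤ (n₀ / n : ℝ) * q := hgval
end

section
/- Let a(R_t) count null z-values in the nested stopping sets R_t with F₀(R_t) = t. Then η_t = a(R_t) − ∫₀^t (n₀ − a(R_s))/(1−s) ds is a martingale with respect to the filtration F_t = σ(1_{z_i ∈ R_s}, s ≤ t). -/
open MeasureTheory Set ProbabilityTheory

section AuxiliaryLemmas

open Filter Topology

lemma riemann_bound {g : ℝ → ℝ} {a b : ℝ} (hab : a ≤ b) (hg : MonotoneOn g (Set.Icc a b))
    (n : ℕ) :
    ((b-a)/2^n) * ∑ i ∈ Finset.range (2^n), g (a + i*((b-a)/2^n)) ≤ (∫ u in a..b, g u) ∧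
    (∫ u in a..b, g u) ≤ ((b-a)/2^n) * (∑ i ∈ Finset.range (2^n), g (a + i*((b-a)/2^n)))
      + (g b - g a) * ((b-a)/2^n) := by
  set δ : ℝ := (b-a)/2^n with hδ
  have hδ0 : 0 ≤ δ := by rw [hδ]; exact div_nonneg (by linarith) (by positivity)
  set x : ℕ → ℝ := fun i => a + i * δ with hx
  have hxmono : Monotone x := fun i j hij => by
    simp only [hx]
    have : (i:ℝ) ≤ j := Nat.cast_le.2 hij
    nlinarith
  have hx0 : x 0 = a := by simp [hx]
  have hxN : x (2^n) = b := by
    simp only [hx]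
    have h2 : (2:ℝ)^n ≠ 0 := by positivity
    field_simp [hδ]
    rw [hδ]; push_cast
    have h3 : (2:ℝ)^n * ((b-a)/2^n) = b - a := by field_simp
    linarith
  have hxmem : ∀ i ≤ 2^n, x i ∈ Set.Icc a b := by
    intro i hi
    constructor
    · simpa [hx0] using hxmono (Nat.zero_le i)
    · simpa [hxN] using hxmono hi
  have hint : ∀ i < 2^n, IntervalIntegrable g volume (x i) (x (i+1)) := by
    intro i hi
    apply MonotoneOn.intervalIntegrable
    intro u hu v hv huv
    have h1 : uIcc (x i) (x (i+1)) ⊆ Icc a b := by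
      rw [uIcc_of_le (hxmono (Nat.le_succ i))]
      exact Icc_subset_Icc (hxmem i hi.le).1 (hxmem (i+1) hi).2
    exact hg (h1 hu) (h1 hv) huv
  have hsplit : (∫ u in a..b, g u) = ∑ i ∈ Finset.range (2^n), ∫ u in x i..x (i+1), g u := by
    rw [intervalIntegral.sum_integral_adjacent_intervals hint, hx0, hxN]
  have hlow : ∀ i < 2^n, δ * g (x i) ≤ ∫ u in x i..x (i+1), g u := by
    intro i hi
    have h1 : x (i+1) - x i = δ := by simp [hx]; ring
    have hle := hxmono (Nat.le_succ i)
    have := intervalIntegral.integral_mono_on hle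
      (intervalIntegrable_const (c := g (x i))) (hint i hi)
      (fun u hu => hg (hxmem i hi.le) (Icc_subset_Icc (hxmem i hi.le).1 (hxmem (i+1) hi).2 hu) hu.1)
    simpa [h1, mul_comm] using this
  have hhigh : ∀ i < 2^n, (∫ u in x i..x (i+1), g u) ≤ δ * g (x (i+1)) := by
    intro i hi
    have h1 : x (i+1) - x i = δ := by simp [hx]; ring
    have hle := hxmono (Nat.le_succ i)
    have := intervalIntegral.integral_mono_on hle (hint i hi)
      (intervalIntegrable_const (c := g (x (i+1))))
      (fun u hu => hg (Icc_subset_Icc (hxmem i hi.le).1 (hxmem (i+1) hi).2 hu) (hxmem (i+1) hi) hu.2)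
    simpa [h1, mul_comm] using this
  constructor
  · rw [hsplit, Finset.mul_sum]
    exact Finset.sum_le_sum fun i hi => hlow i (Finset.mem_range.1 hi)
  · rw [hsplit]
    have h1 : ∑ i ∈ Finset.range (2^n), ∫ u in x i..x (i+1), g u
        ≤ ∑ i ∈ Finset.range (2^n), δ * g (x (i+1)) :=
      Finset.sum_le_sum fun i hi => hhigh i (Finset.mem_range.1 hi)
    have h2 : ∑ i ∈ Finset.range (2^n), δ * g (x (i+1))
        = δ * ∑ i ∈ Finset.range (2^n), g (x i) + (g b - g a) * δ := by
      have h3 : ∑ i ∈ Finset.range (2^n), (g (x (i+1)) - g (x i)) = g (x (2^n)) - g (x 0) :=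
        Finset.sum_range_sub (fun i => g (x i)) (2^n)
    -- δ * Σ g(x(i+1)) = δ * (Σ g(x i) + (g b - g a))
      rw [← Finset.mul_sum]
      have : ∑ i ∈ Finset.range (2^n), g (x (i+1))
          = ∑ i ∈ Finset.range (2^n), g (x i) + (g b - g a) := by
        have := Finset.sum_range_sub (fun i => g (x i)) (2^n)
        have h4 : ∑ i ∈ Finset.range (2^n), (g (x (i+1)) - g (x i))
            = ∑ i ∈ Finset.range (2^n), g (x (i+1)) - ∑ i ∈ Finset.range (2^n), g (x i) :=
          Finset.sum_sub_distrib _ _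
        rw [h4, hx0, hxN] at this
        linarith
      rw [this]; ring
    calc ∑ i ∈ Finset.range (2^n), ∫ u in x i..x (i+1), g u
        ≤ δ * ∑ i ∈ Finset.range (2^n), g (x i) + (g b - g a) * δ := by rw [← h2]; exact h1
      _ = _ := rfl

lemma riemann_tendsto {g : ℝ → ℝ} {a b : ℝ} (hab : a ≤ b) (hg : MonotoneOn g (Set.Icc a b)) :
    Tendsto (fun n : ℕ => ((b-a)/2^n) * ∑ i ∈ Finset.range (2^n), g (a + i*((b-a)/2^n)))
      atTop (𝓝 (∫ u in a..b, g u)) := by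
  have h0 : Tendsto (fun n : ℕ => (∫ u in a..b, g u) - (g b - g a) * (b-a) * (1/2:ℝ)^n)
      atTop (𝓝 (∫ u in a..b, g u)) := by
    have := tendsto_pow_atTop_nhds_zero_of_lt_one (r := (1/2:ℝ)) (by norm_num) (by norm_num)
    have h2 := (this.const_mul ((g b - g a) * (b-a))).const_sub (∫ u in a..b, g u)
    simpa using h2
  refine tendsto_of_tendsto_of_tendsto_of_le_of_le h0 tendsto_const_nhds ?_ ?_
  · intro n
    have h := (riemann_bound hab hg n).2
    have he : (g b - g a) * ((b-a)/2^n) = (g b - g a) * (b-a) * (1/2:ℝ)^n := by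
      rw [div_pow, one_pow]; ring
    simp only []
    linarith [h, he ▸ h]
  · intro n
    exact (riemann_bound hab hg n).1

lemma binom_mean (n₀ m : ℕ) (hm : m ≤ n₀) (p : ℝ) :
    ∑ k ∈ Finset.range (n₀+1), (k:ℝ) * ((m.choose k : ℝ) * p^k * (1-p)^(m-k)) = m * p := by
  have hsub : ∑ k ∈ Finset.range (n₀+1), (k:ℝ) * ((m.choose k : ℝ) * p^k * (1-p)^(m-k))
      = ∑ k ∈ Finset.range (m+1), (k:ℝ) * ((m.choose k : ℝ) * p^k * (1-p)^(m-k)) := by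
    symm
    apply Finset.sum_subset
    · intro k hk; simp only [Finset.mem_range] at *; omega
    · intro k hk hk2
      simp only [Finset.mem_range] at hk hk2
      have hlt : m < k := by omega
      simp [Nat.choose_eq_zero_of_lt hlt]
  rw [hsub]
  rcases Nat.eq_zero_or_pos m with h0 | hpos
  · subst h0; simp
  obtain ⟨m', rfl⟩ : ∃ m', m = m' + 1 := ⟨m-1, by omega⟩
  rw [Finset.sum_range_succ']
  have hterm : ∀ i, ((i+1:ℕ):ℝ) * (((m'+1).choose (i+1) : ℝ) * p^(i+1) * (1-p)^(m'+1-(i+1)))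
      = ((m'+1:ℕ):ℝ) * p * ((m'.choose i : ℝ) * p^i * (1-p)^(m'-i)) := by
    intro i
    have hc : ((m'+1) * m'.choose i : ℕ) = ((m'+1).choose (i+1) * (i+1) : ℕ) :=
      Nat.add_one_mul_choose_eq m' i
    have hc' : ((m'+1:ℕ):ℝ) * (m'.choose i : ℝ) = ((m'+1).choose (i+1) : ℝ) * ((i+1:ℕ):ℝ) := by
      exact_mod_cast congrArg (Nat.cast : ℕ → ℝ) hc
    have hs : m'+1-(i+1) = m'-i := by omega
    rw [hs]
    linear_combination (p^(i+1) * (1-p)^(m'-i)) * hc'.symm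
  have hone : ∑ i ∈ Finset.range (m'+1), ((m'.choose i : ℝ) * p^i * (1-p)^(m'-i)) = 1 := by
    have h := add_pow p (1-p) m'
    have h2 : p + (1-p) = 1 := by ring
    rw [h2, one_pow] at h
    calc ∑ i ∈ Finset.range (m'+1), ((m'.choose i : ℝ) * p^i * (1-p)^(m'-i))
        = ∑ i ∈ Finset.range (m'+1), p^i * (1-p)^(m'-i) * (m'.choose i : ℝ) :=
        Finset.sum_congr rfl fun i _ => by ring
      _ = 1 := h.symm
  have hsum2 : ∑ i ∈ Finset.range (m'+1),
      ((i+1:ℕ):ℝ) * (((m'+1).choose (i+1) : ℝ) * p^(i+1) * (1-p)^(m'+1-(i+1)))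
      = ((m'+1:ℕ):ℝ) * p := by
    calc ∑ i ∈ Finset.range (m'+1),
        ((i+1:ℕ):ℝ) * (((m'+1).choose (i+1) : ℝ) * p^(i+1) * (1-p)^(m'+1-(i+1)))
        = ∑ i ∈ Finset.range (m'+1),
          ((m'+1:ℕ):ℝ) * p * ((m'.choose i : ℝ) * p^i * (1-p)^(m'-i)) :=
          Finset.sum_congr rfl fun i _ => hterm i
      _ = ((m'+1:ℕ):ℝ) * p * ∑ i ∈ Finset.range (m'+1),
          ((m'.choose i : ℝ) * p^i * (1-p)^(m'-i)) := by rw [Finset.mul_sum]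
      _ = ((m'+1:ℕ):ℝ) * p := by rw [hone, mul_one]
  push_cast at hsum2 ⊢
  rw [hsum2]
  ring

open ProbabilityTheory

lemma integrable_of_bdd {Ω : Type*} [MeasurableSpace Ω] {μ : MeasureTheory.Measure Ω}
    [MeasureTheory.IsFiniteMeasure μ] {f : Ω → ℝ} (hf : Measurable f) (C : ℝ)
    (h : ∀ ω, |f ω| ≤ C) : MeasureTheory.Integrable f μ := by
  apply MeasureTheory.Integrable.mono' (MeasureTheory.integrable_const C)
    hf.aestronglyMeasurable
  filter_upwards with ω using h ω

end AuxiliaryLemmas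

open Filter Topology

set_option maxHeartbeats 2000000

/-- Let `aR t` count the null z-values in the nested stopping sets `R_t`
(with `F₀(R_t) = t`), adapted to the filtration `ℱ_t = σ(1_{z_i ∈ R_s}, s ≤ t)` so
that, conditionally on `ℱ_s`, the increment `aR t - aR s` has a Binomial distribution
with parameters `n₀ - aR s` and `(t-s)/(1-s)`.  Then
`η_t = aR t − ∫₀^t (n₀ − aR s)/(1−s) ds` is a martingale with respect to `ℱ`. -/
theorem nested_counting_martingale
    {Ω : Type*} [m0 : MeasurableSpace Ω] (μ : Measure Ω) [IsProbabilityMeasure μ]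
    (n₀ : ℕ)
    (aR : ℝ → Ω → ℕ)
    (hbdd : ∀ t ω, aR t ω ≤ n₀)
    (hmono : ∀ ω, ∀ s t : ℝ, s ≤ t → aR s ω ≤ aR t ω)
    (ℱ : Filtration (Set.Ico (0:ℝ) 1) m0)
    (hadapted : ∀ t : Set.Ico (0:ℝ) 1, Measurable[ℱ t] (aR (t : ℝ)))
    (hbinom : ∀ s t : Set.Ico (0:ℝ) 1, s ≤ t → ∀ k : ℕ,
      μ[(fun ω => if aR t ω - aR s ω = k then (1:ℝ) else 0) | ℱ s]
        =ᵐ[μ] fun ω =>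
          ((n₀ - aR s ω).choose k : ℝ) * (((t:ℝ) - s) / (1 - s)) ^ k
            * (1 - ((t:ℝ) - s) / (1 - s)) ^ (n₀ - aR s ω - k)) :
    Martingale
      (fun (t : Set.Ico (0:ℝ) 1) ω =>
        (aR t ω : ℝ) - ∫ s in (0:ℝ)..(t : ℝ), ((n₀ : ℝ) - aR s ω) / (1 - s))
      ℱ μ := by
  have hlt : ∀ t : Set.Ico (0:ℝ) 1, (t:ℝ) < 1 := fun t => t.2.2
  have hle0 : ∀ t : Set.Ico (0:ℝ) 1, (0:ℝ) ≤ t := fun t => t.2.1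
  -- measurability of `aR u` w.r.t. `ℱ t` for `u ∈ [0, t]`
  have hmeas_pt : ∀ (t : Set.Ico (0:ℝ) 1) (u : ℝ), 0 ≤ u → u ≤ (t:ℝ) →
      Measurable[ℱ t] (fun ω => (aR u ω : ℝ)) := by
    intro t u hu0 hut
    have hu1 : u < 1 := lt_of_le_of_lt hut (hlt t)
    have h1 : (⟨u, ⟨hu0, hu1⟩⟩ : Set.Ico (0:ℝ) 1) ≤ t := Subtype.mk_le_mk.2 hut
    exact measurable_from_top.comp ((hadapted ⟨u, ⟨hu0, hu1⟩⟩).mono (ℱ.mono h1) le_rfl)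
  have hmeas0 : ∀ u : ℝ, 0 ≤ u → u < 1 → Measurable (fun ω => (aR u ω : ℝ)) := by
    intro u hu0 hu1
    exact ((hmeas_pt ⟨u, ⟨hu0, hu1⟩⟩ u hu0 le_rfl).mono (ℱ.le _) le_rfl)
  -- monotonicity of `u ↦ aR u ω / (1 - u)` on `[a, b] ⊆ [0, 1)`
  have hψmono : ∀ (ω : Ω) (a b : ℝ), 0 ≤ a → b < 1 →
      MonotoneOn (fun u => (aR u ω : ℝ)/(1-u)) (Set.Icc a b) := by
    intro ω a b ha hb u hu v hv huv
    simp only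
    have h1 : 0 < 1 - v := by linarith [hv.2]
    have h2 : 1 - v ≤ 1 - u := by linarith
    have h3 : (aR u ω : ℝ) ≤ (aR v ω : ℝ) := Nat.cast_le.2 (hmono ω u v huv)
    exact div_le_div₀ (Nat.cast_nonneg _) h3 h1 h2
  -- interval integrability
  have hint1 : ∀ a b : ℝ, a ≤ b → b < 1 →
      IntervalIntegrable (fun u => (n₀:ℝ)/(1-u)) volume a b := by
    intro a b hab hb
    apply ContinuousOn.intervalIntegrable
    apply ContinuousOn.div continuousOn_const (by fun_prop)
    intro u hu
    rw [uIcc_of_le hab] at hu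
    have := hu.2
    intro h; linarith [h]
  have hint2 : ∀ (ω : Ω) (a b : ℝ), 0 ≤ a → a ≤ b → b < 1 →
      IntervalIntegrable (fun u => (aR u ω:ℝ)/(1-u)) volume a b := by
    intro ω a b ha hab hb
    apply MonotoneOn.intervalIntegrable
    rw [uIcc_of_le hab]
    exact hψmono ω a b ha hb
  have hint3 : ∀ (ω : Ω) (a b : ℝ), 0 ≤ a → a ≤ b → b < 1 →
      IntervalIntegrable (fun u => ((n₀:ℝ) - aR u ω)/(1-u)) volume a b := by
    intro ω a b ha hab hb
    have : (fun u => ((n₀:ℝ) - aR u ω)/(1-u))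
        = fun u => (n₀:ℝ)/(1-u) - (aR u ω:ℝ)/(1-u) := by
      funext u; rw [sub_div]
    rw [this]
    exact (hint1 a b hab hb).sub (hint2 ω a b ha hab hb)
  -- decomposition of the compensator integral
  have hIeq : ∀ (ω : Ω) (a b : ℝ), 0 ≤ a → a ≤ b → b < 1 →
      (∫ u in a..b, ((n₀:ℝ) - aR u ω)/(1-u))
        = (∫ u in a..b, (n₀:ℝ)/(1-u)) - ∫ u in a..b, (aR u ω:ℝ)/(1-u) := by
    intro ω a b ha hab hb
    rw [← intervalIntegral.integral_sub (hint1 a b hab hb) (hint2 ω a b ha hab hb)]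
    apply intervalIntegral.integral_congr
    intro u hu; simp only [sub_div]
  -- measurability of the ψ-integral w.r.t. ℱ t
  have hpt_le : ∀ (a b : ℝ) (n i : ℕ), a ≤ b → i ∈ Finset.range (2^n) →
      a ≤ a + i*((b-a)/2^n) ∧ a + i*((b-a)/2^n) ≤ b := by
    intro a b n i hb hi
    rw [Finset.mem_range] at hi
    have h2 : (0:ℝ) < 2^n := by positivity
    have hb0 : (0:ℝ) ≤ b - a := by linarith
    constructor
    · have : (0:ℝ) ≤ (i:ℝ) * ((b-a)/2^n) :=
        mul_nonneg (Nat.cast_nonneg i) (div_nonneg hb0 h2.le)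
      linarith
    · have hi' : (i:ℝ) ≤ 2^n := by
        calc (i:ℝ) ≤ ((2^n : ℕ):ℝ) := Nat.cast_le.2 hi.le
          _ = 2^n := by push_cast; ring
      have : (i:ℝ) * ((b-a)/2^n) ≤ 2^n * ((b-a)/2^n) :=
        mul_le_mul_of_nonneg_right hi' (div_nonneg hb0 h2.le)
      have h3 : (2:ℝ)^n * ((b-a)/2^n) = b - a := by field_simp
      linarith
  have hXmeas : ∀ t : Set.Ico (0:ℝ) 1,
      Measurable[ℱ t] (fun ω => ∫ u in (0:ℝ)..(t:ℝ), (aR u ω:ℝ)/(1-u)) := by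
    intro t
    have hLn : ∀ n : ℕ, Measurable[ℱ t] (fun ω =>
        (((t:ℝ)-0)/2^n) * ∑ i ∈ Finset.range (2^n),
          (aR (0 + i*(((t:ℝ)-0)/2^n)) ω : ℝ)/(1-(0 + i*(((t:ℝ)-0)/2^n)))) := by
      intro n
      apply Measurable.const_mul
      apply Finset.measurable_sum
      intro i hi
      obtain ⟨h1, h2⟩ := hpt_le 0 (t:ℝ) n i (hle0 t) hi
      rw [zero_add] at h1 h2
      rw [show (0:ℝ) + i*(((t:ℝ)-0)/2^n) = i*(((t:ℝ)-0)/2^n) from zero_add _]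
      exact (hmeas_pt t _ h1 h2).div_const _
    have htend : Tendsto (fun (n : ℕ) ω =>
        (((t:ℝ)-0)/2^n) * ∑ i ∈ Finset.range (2^n),
          (aR (0 + i*(((t:ℝ)-0)/2^n)) ω : ℝ)/(1-(0 + i*(((t:ℝ)-0)/2^n)))) atTop
        (𝓝 (fun ω => ∫ u in (0:ℝ)..(t:ℝ), (aR u ω:ℝ)/(1-u))) := by
      rw [tendsto_pi_nhds]
      intro ω
      exact riemann_tendsto (hle0 t) (hψmono ω 0 (t:ℝ) le_rfl (hlt t))
    exact @measurable_of_tendsto_metrizable Ω ℝ (ℱ t) _ _ _ _ _ _ hLn htend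
  -- adaptedness
  have hadp : StronglyAdapted ℱ (fun (t : Set.Ico (0:ℝ) 1) ω =>
      (aR t ω : ℝ) - ∫ s in (0:ℝ)..(t : ℝ), ((n₀ : ℝ) - aR s ω) / (1 - s)) := by
    intro t
    apply Measurable.stronglyMeasurable
    show Measurable[ℱ t] (fun ω =>
      (aR (t:ℝ) ω : ℝ) - ∫ s in (0:ℝ)..(t:ℝ), ((n₀:ℝ) - aR s ω)/(1-s))
    have h1 : (fun ω => (aR (t:ℝ) ω : ℝ) - ∫ s in (0:ℝ)..(t:ℝ), ((n₀:ℝ) - aR s ω)/(1-s))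
        = fun ω => (aR (t:ℝ) ω : ℝ) - ((∫ u in (0:ℝ)..(t:ℝ), (n₀:ℝ)/(1-u))
            - ∫ u in (0:ℝ)..(t:ℝ), (aR u ω:ℝ)/(1-u)) := by
      funext ω; rw [hIeq ω 0 t (le_refl 0) (hle0 t) (hlt t)]
    rw [h1]
    exact (hmeas_pt t t (hle0 t) le_rfl).sub (measurable_const.sub (hXmeas t))
  -- uniform bound and integrability
  have hbint : ∀ t : Set.Ico (0:ℝ) 1, Integrable (fun ω =>
      (aR t ω : ℝ) - ∫ s in (0:ℝ)..(t : ℝ), ((n₀ : ℝ) - aR s ω) / (1 - s)) μ := by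
    intro t
    have hsm : AEStronglyMeasurable (fun ω =>
        (aR (t:ℝ) ω:ℝ) - ∫ s in (0:ℝ)..(t:ℝ), ((n₀:ℝ) - aR s ω)/(1-s)) μ :=
      ((hadp t).mono (ℱ.le t)).aestronglyMeasurable
    apply Integrable.mono'
      (integrable_const ((n₀:ℝ) + (n₀:ℝ)/(1-(t:ℝ)) * |(t:ℝ) - 0|)) hsm
    filter_upwards with ω
    have h1 : ‖(aR (t:ℝ) ω : ℝ)‖ ≤ (n₀:ℝ) := by
      rw [Real.norm_eq_abs, abs_of_nonneg (Nat.cast_nonneg _)]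
      exact_mod_cast hbdd _ ω
    have h2 : ‖∫ s in (0:ℝ)..(t:ℝ), ((n₀:ℝ) - aR s ω)/(1-s)‖
        ≤ (n₀:ℝ)/(1-(t:ℝ)) * |(t:ℝ) - 0| := by
      apply intervalIntegral.norm_integral_le_of_norm_le_const
      intro u hu
      rw [uIoc_of_le (hle0 t)] at hu
      have h3 : 0 < 1 - (t:ℝ) := by linarith [hlt t]
      have h4 : 1 - (t:ℝ) ≤ 1 - u := by linarith [hu.2]
      have h5 : (0:ℝ) ≤ (n₀:ℝ) - aR u ω := by
        have := hbdd u ω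
        exact sub_nonneg.2 (Nat.cast_le.2 this)
      rw [Real.norm_eq_abs, abs_div, abs_of_nonneg h5, abs_of_pos (lt_of_lt_of_le h3 h4)]
      exact div_le_div₀ (Nat.cast_nonneg _)
        (by linarith [Nat.cast_nonneg (α:=ℝ) (aR u ω)]) h3 h4
    exact le_trans (norm_sub_le _ _) (add_le_add h1 h2)
  -- the key set-integral identity from the binomial hypothesis
  have hE : ∀ s t : Set.Ico (0:ℝ) 1, s ≤ t → ∀ A : Set Ω, MeasurableSet[ℱ s] A →
      ∫ ω in A, (aR (t:ℝ) ω : ℝ) ∂μ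
        = ∫ ω in A, ((aR (s:ℝ) ω : ℝ)
            + ((n₀:ℝ) - aR (s:ℝ) ω) * (((t:ℝ) - s)/(1 - s))) ∂μ := by
    intro s t hst A hA
    have hst' : (s:ℝ) ≤ (t:ℝ) := Subtype.coe_le_coe.2 hst
    have hs1 : (0:ℝ) < 1 - s := by linarith [hlt s]
    have hp0 : 0 ≤ ((t:ℝ) - s)/(1 - s) := div_nonneg (by linarith) hs1.le
    have hp1 : ((t:ℝ) - s)/(1 - s) ≤ 1 := by
      rw [div_le_one hs1]; linarith [hlt t]
    have hAm : MeasurableSet A := ℱ.le s A hA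
    have hms : Measurable (aR (s:ℝ)) := (hadapted s).mono (ℱ.le s) le_rfl
    have hmt : Measurable (aR (t:ℝ)) := (hadapted t).mono (ℱ.le t) le_rfl
    have hmsr : Measurable (fun ω => (aR (s:ℝ) ω : ℝ)) := measurable_from_top.comp hms
    have hmtr : Measurable (fun ω => (aR (t:ℝ) ω : ℝ)) := measurable_from_top.comp hmt
    have hIint : ∀ k : ℕ, Integrable
        (fun ω => if aR (t:ℝ) ω - aR (s:ℝ) ω = k then (1:ℝ) else 0) μ := by
      intro k
      apply integrable_of_bdd _ 1
      · intro ω; split_ifs <;> simp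
      · exact Measurable.ite ((hmt.sub hms) (measurableSet_singleton k))
          measurable_const measurable_const
    have hBint : ∀ k : ℕ, Integrable (fun ω =>
        ((n₀ - aR (s:ℝ) ω).choose k : ℝ) * (((t:ℝ) - s)/(1 - s)) ^ k
          * (1 - ((t:ℝ) - s)/(1 - s)) ^ (n₀ - aR (s:ℝ) ω - k)) μ := by
      intro k
      apply integrable_of_bdd _ ((n₀.choose k : ℝ))
      · intro ω
        rw [abs_mul, abs_mul]
        have h1 : |(((n₀ - aR (s:ℝ) ω).choose k : ℕ):ℝ)| ≤ (n₀.choose k : ℝ) := by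
          rw [abs_of_nonneg (Nat.cast_nonneg _)]
          exact_mod_cast Nat.choose_le_choose k (Nat.sub_le n₀ _)
        have h2 : |(((t:ℝ) - s)/(1 - s)) ^ k| ≤ 1 := by
          rw [abs_pow, abs_of_nonneg hp0]
          exact pow_le_one₀ hp0 hp1
        have h3 : |(1 - ((t:ℝ) - s)/(1 - s)) ^ (n₀ - aR (s:ℝ) ω - k)| ≤ 1 := by
          rw [abs_pow, abs_of_nonneg (by linarith)]
          exact pow_le_one₀ (by linarith) (by linarith)
        calc |(((n₀ - aR (s:ℝ) ω).choose k : ℕ):ℝ)| * |(((t:ℝ) - s)/(1 - s)) ^ k|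
              * |(1 - ((t:ℝ) - s)/(1 - s)) ^ (n₀ - aR (s:ℝ) ω - k)|
            ≤ (n₀.choose k : ℝ) * 1 * 1 := by
              apply mul_le_mul (mul_le_mul h1 h2 (abs_nonneg _) (Nat.cast_nonneg _)) h3
                (abs_nonneg _)
              positivity
          _ = (n₀.choose k : ℝ) := by ring
      · exact (measurable_from_top (f := fun m : ℕ => ((n₀ - m).choose k : ℝ)
          * (((t:ℝ) - s)/(1 - s)) ^ k
          * (1 - ((t:ℝ) - s)/(1 - s)) ^ (n₀ - m - k))).comp hms
    have hB : ∀ k : ℕ, ∫ ω in A, (if aR (t:ℝ) ω - aR (s:ℝ) ω = k then (1:ℝ) else 0) ∂μ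
        = ∫ ω in A, ((n₀ - aR (s:ℝ) ω).choose k : ℝ) * (((t:ℝ) - s)/(1 - s)) ^ k
            * (1 - ((t:ℝ) - s)/(1 - s)) ^ (n₀ - aR (s:ℝ) ω - k) ∂μ := by
      intro k
      rw [← setIntegral_condExp (ℱ.le s) (hIint k) hA]
      apply setIntegral_congr_ae hAm
      filter_upwards [hbinom s t hst k] with ω h _
      exact h
    have hpt : (fun ω => (aR (t:ℝ) ω : ℝ)) = fun ω => (aR (s:ℝ) ω : ℝ)
        + ∑ k ∈ Finset.range (n₀+1),
          (k:ℝ) * (if aR (t:ℝ) ω - aR (s:ℝ) ω = k then (1:ℝ) else 0) := by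
      funext ω
      have hd : aR (t:ℝ) ω - aR (s:ℝ) ω ∈ Finset.range (n₀+1) :=
        Finset.mem_range.2 (by have := hbdd (t:ℝ) ω; omega)
      have hsum : ∑ k ∈ Finset.range (n₀+1),
          (k:ℝ) * (if aR (t:ℝ) ω - aR (s:ℝ) ω = k then (1:ℝ) else 0)
          = ((aR (t:ℝ) ω - aR (s:ℝ) ω : ℕ) : ℝ) := by
        rw [Finset.sum_eq_single (aR (t:ℝ) ω - aR (s:ℝ) ω)]
        · simp
        · intro k _ hk
          simp [Ne.symm hk]
        · intro h; exact absurd hd h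
      rw [hsum, Nat.cast_sub (hmono ω s t hst')]
      ring
    rw [hpt]
    rw [integral_add ((integrable_of_bdd hmsr (n₀:ℝ) (fun ω => by
        rw [abs_of_nonneg (Nat.cast_nonneg _)]; exact_mod_cast hbdd _ ω)).integrableOn)
      ((integrable_finset_sum _ (fun k _ => (hIint k).const_mul (k:ℝ))).integrableOn)]
    rw [integral_finset_sum _ (fun k _ => ((hIint k).const_mul (k:ℝ)).integrableOn)]
    have hstep : ∀ k ∈ Finset.range (n₀+1),
        ∫ ω in A, (k:ℝ) * (if aR (t:ℝ) ω - aR (s:ℝ) ω = k then (1:ℝ) else 0) ∂μ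
        = ∫ ω in A, (k:ℝ) * (((n₀ - aR (s:ℝ) ω).choose k : ℝ) * (((t:ℝ) - s)/(1 - s)) ^ k
            * (1 - ((t:ℝ) - s)/(1 - s)) ^ (n₀ - aR (s:ℝ) ω - k)) ∂μ := by
      intro k _
      rw [integral_const_mul, integral_const_mul, hB k]
    rw [Finset.sum_congr rfl hstep]
    rw [← integral_finset_sum _ (fun k _ => ((hBint k).const_mul (k:ℝ)).integrableOn)]
    have hmean : (fun ω => ∑ k ∈ Finset.range (n₀+1),
        (k:ℝ) * (((n₀ - aR (s:ℝ) ω).choose k : ℝ) * (((t:ℝ) - s)/(1 - s)) ^ k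
          * (1 - ((t:ℝ) - s)/(1 - s)) ^ (n₀ - aR (s:ℝ) ω - k)))
        = fun ω => ((n₀:ℝ) - aR (s:ℝ) ω) * (((t:ℝ) - s)/(1 - s)) := by
      funext ω
      have := binom_mean n₀ (n₀ - aR (s:ℝ) ω) (Nat.sub_le _ _) (((t:ℝ) - s)/(1 - s))
      rw [Nat.cast_sub (hbdd _ ω)] at this
      exact this
    rw [hmean]
    rw [← integral_add ((integrable_of_bdd hmsr (n₀:ℝ) (fun ω => by
        rw [abs_of_nonneg (Nat.cast_nonneg _)]; exact_mod_cast hbdd _ ω)).integrableOn)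
      (Integrable.integrableOn (integrable_of_bdd (f := fun ω => ((n₀:ℝ) - aR (s:ℝ) ω) * (((t:ℝ) - s)/(1 - s))) ((measurable_const.sub hmsr).mul
        measurable_const) ((n₀:ℝ) * 1) (fun ω => by
        rw [abs_mul]
        apply mul_le_mul _ _ (abs_nonneg _) (Nat.cast_nonneg _)
        · rw [abs_of_nonneg (by
            have := hbdd (s:ℝ) ω
            have : ((aR (s:ℝ) ω : ℕ):ℝ) ≤ (n₀:ℝ) := Nat.cast_le.2 this
            linarith)]
          have : ((aR (s:ℝ) ω : ℕ):ℝ) ≥ 0 := Nat.cast_nonneg _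
          linarith
        · rw [abs_of_nonneg hp0]
          exact hp1)))]
  refine ⟨hadp, fun i j hij => ?_⟩
  haveI : SigmaFinite (μ.trim (ℱ.le i)) := by
    have : IsFiniteMeasure (μ.trim (ℱ.le i)) := isFiniteMeasure_trim _
    infer_instance
  refine (ae_eq_condExp_of_forall_setIntegral_eq (ℱ.le i) (hbint j)
    (fun A hA _ => (hbint i).integrableOn) ?_ ?_).symm
  · intro A hA _
    have hAm : MeasurableSet A := ℱ.le i A hA
    have hij' : (i:ℝ) ≤ (j:ℝ) := Subtype.coe_le_coe.2 hij
    have hi0 : (0:ℝ) ≤ i := hle0 i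
    have hi1 : (i:ℝ) < 1 := hlt i
    have hj0 : (0:ℝ) ≤ j := hle0 j
    have hj1 : (j:ℝ) < 1 := hlt j
    have hs1 : (0:ℝ) < 1 - (i:ℝ) := by linarith
    have ht1 : (0:ℝ) < 1 - (j:ℝ) := by linarith
    have hμA : (μ A).toReal ≤ 1 := by
      have h1 : μ A ≤ μ univ := measure_mono (subset_univ A)
      have h2 : μ univ = 1 := measure_univ
      calc (μ A).toReal ≤ (μ univ).toReal :=
            ENNReal.toReal_mono (by rw [h2]; exact ENNReal.one_ne_top) h1
        _ = 1 := by rw [h2]; simp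
    have hμA0 : 0 ≤ (μ A).toReal := ENNReal.toReal_nonneg
    -- basic integrability
    have haRint : ∀ r : Set.Ico (0:ℝ) 1, Integrable (fun ω => (aR (r:ℝ) ω:ℝ)) μ := by
      intro r
      have hm : Measurable (fun ω => (aR (r:ℝ) ω:ℝ)) :=
        measurable_from_top.comp ((hadapted r).mono (ℱ.le r) le_rfl)
      apply integrable_of_bdd hm (n₀:ℝ)
      intro ω
      rw [abs_of_nonneg (Nat.cast_nonneg _)]
      exact_mod_cast hbdd _ ω
    have hIntint : ∀ r : Set.Ico (0:ℝ) 1,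
        Integrable (fun ω => ∫ u in (0:ℝ)..(r:ℝ), ((n₀:ℝ) - aR u ω)/(1-u)) μ := by
      intro r
      have h := (haRint r).sub (hbint r)
      apply h.congr (ae_of_all _ fun ω => ?_)
      simp only [Pi.sub_apply]
      ring
    -- the two basic set integrals
    set α : ℝ := ∫ ω in A, (aR (i:ℝ) ω : ℝ) ∂μ with hα
    set β : ℝ := ∫ ω in A, ((n₀:ℝ) - aR (i:ℝ) ω) ∂μ with hβ
    have hnαint : Integrable (fun ω => (n₀:ℝ) - aR (i:ℝ) ω) μ :=
      (integrable_const _).sub (haRint i)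
    have hab : α + β = (n₀:ℝ) * (μ A).toReal := by
      rw [hα, hβ, ← integral_add ((haRint i).integrableOn) hnαint.integrableOn]
      have heq : (fun ω => (aR (i:ℝ) ω:ℝ) + ((n₀:ℝ) - aR (i:ℝ) ω)) = fun _ => (n₀:ℝ) := by
        funext ω; ring
      rw [heq, setIntegral_const, smul_eq_mul, mul_comm]
      rfl
    -- mean identity for intermediate times
    have hEr : ∀ u : ℝ, (i:ℝ) ≤ u → u ≤ (j:ℝ) →
        ∫ ω in A, (aR u ω : ℝ) ∂μ = α + β * ((u - (i:ℝ))/(1 - (i:ℝ))) := by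
      intro u hu1 hu2
      have hu0 : 0 ≤ u := le_trans hi0 hu1
      have hu1' : u < 1 := lt_of_le_of_lt hu2 hj1
      have h1 := hE i ⟨u, ⟨hu0, hu1'⟩⟩ (Subtype.coe_le_coe.1 hu1) A hA
      have h2 : ∫ ω in A, ((aR (i:ℝ) ω:ℝ)
            + ((n₀:ℝ) - aR (i:ℝ) ω) * ((u - (i:ℝ))/(1 - (i:ℝ)))) ∂μ
          = α + β * ((u - (i:ℝ))/(1 - (i:ℝ))) := by
        rw [integral_add ((haRint i).integrableOn)
          (hnαint.mul_const _).integrableOn, integral_mul_const, hα, hβ]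
      exact h1.trans h2
    -- the constant K bounding ψ on [i, j]
    have hψbd : ∀ (ω : Ω) (u : ℝ), 0 ≤ u → u ≤ (j:ℝ) →
        (aR u ω:ℝ)/(1-u) ∈ Set.Icc (0:ℝ) ((n₀:ℝ)/(1-(j:ℝ))) := by
      intro ω u hu0 huj
      have h4 : 1 - (j:ℝ) ≤ 1 - u := by linarith
      constructor
      · exact div_nonneg (Nat.cast_nonneg _) (by linarith)
      · exact div_le_div₀ (Nat.cast_nonneg _) (by exact_mod_cast hbdd u ω) ht1 h4
    -- integrability of the middle interval integrals
    have hFst_eq : ∀ ω, (∫ u in (i:ℝ)..(j:ℝ), ((n₀:ℝ) - aR u ω)/(1-u))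
        = (∫ u in (0:ℝ)..(j:ℝ), ((n₀:ℝ) - aR u ω)/(1-u))
          - ∫ u in (0:ℝ)..(i:ℝ), ((n₀:ℝ) - aR u ω)/(1-u) := by
      intro ω
      have h := intervalIntegral.integral_add_adjacent_intervals
        (hint3 ω 0 (i:ℝ) le_rfl hi0 hi1) (hint3 ω (i:ℝ) (j:ℝ) hi0 hij' hj1)
      linarith
    have hFstint : Integrable
        (fun ω => ∫ u in (i:ℝ)..(j:ℝ), ((n₀:ℝ) - aR u ω)/(1-u)) μ := by
      have h := (hIntint j).sub (hIntint i)
      exact h.congr (ae_of_all _ fun ω => (hFst_eq ω).symm)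
    set J1 : ℝ := ∫ u in (i:ℝ)..(j:ℝ), (1-u)⁻¹ with hJ1
    have hJc : ∀ ω, (∫ u in (i:ℝ)..(j:ℝ), ((n₀:ℝ) - aR u ω)/(1-u))
        = (n₀:ℝ) * J1 - ∫ u in (i:ℝ)..(j:ℝ), (aR u ω:ℝ)/(1-u) := by
      intro ω
      rw [hIeq ω (i:ℝ) (j:ℝ) hi0 hij' hj1]
      congr 1
      rw [hJ1, ← intervalIntegral.integral_const_mul]
      apply intervalIntegral.integral_congr
      intro u _
      simp [div_eq_mul_inv]
    have hXstint : Integrable (fun ω => ∫ u in (i:ℝ)..(j:ℝ), (aR u ω:ℝ)/(1-u)) μ := by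
      have h := (integrable_const ((n₀:ℝ) * J1)).sub hFstint
      apply h.congr (ae_of_all _ fun ω => ?_)
      have h2 := hJc ω
      simp only [Pi.sub_apply]
      linarith
    -- Riemann sums for the middle ψ integral
    have hLnmeas : ∀ n : ℕ, Measurable (fun ω =>
        (((j:ℝ)-(i:ℝ))/2^n) * ∑ k ∈ Finset.range (2^n),
          (aR ((i:ℝ) + k*(((j:ℝ)-(i:ℝ))/2^n)) ω : ℝ)/(1-((i:ℝ) + k*(((j:ℝ)-(i:ℝ))/2^n)))) := by
      intro n
      apply Measurable.const_mul
      apply Finset.measurable_sum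
      intro k hk
      obtain ⟨h1, h2⟩ := hpt_le (i:ℝ) (j:ℝ) n k hij' hk
      exact (hmeas0 _ (le_trans hi0 h1) (lt_of_le_of_lt h2 hj1)).div_const _
    have hLnbd : ∀ (n : ℕ) (ω : Ω), |(((j:ℝ)-(i:ℝ))/2^n) * ∑ k ∈ Finset.range (2^n),
        (aR ((i:ℝ) + k*(((j:ℝ)-(i:ℝ))/2^n)) ω : ℝ)/(1-((i:ℝ) + k*(((j:ℝ)-(i:ℝ))/2^n)))|
        ≤ ((j:ℝ)-(i:ℝ)) * ((n₀:ℝ)/(1-(j:ℝ))) := by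
      intro n ω
      have hδ0 : (0:ℝ) ≤ ((j:ℝ)-(i:ℝ))/2^n := div_nonneg (by linarith) (by positivity)
      rw [abs_mul, abs_of_nonneg hδ0]
      have hsum : |∑ k ∈ Finset.range (2^n),
          (aR ((i:ℝ) + k*(((j:ℝ)-(i:ℝ))/2^n)) ω : ℝ)/(1-((i:ℝ) + k*(((j:ℝ)-(i:ℝ))/2^n)))|
          ≤ 2^n * ((n₀:ℝ)/(1-(j:ℝ))) := by
        apply le_trans (Finset.abs_sum_le_sum_abs _ _)
        have h1 : ∀ k ∈ Finset.range (2^n),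
            |(aR ((i:ℝ) + k*(((j:ℝ)-(i:ℝ))/2^n)) ω : ℝ)/(1-((i:ℝ) + k*(((j:ℝ)-(i:ℝ))/2^n)))|
            ≤ (n₀:ℝ)/(1-(j:ℝ)) := by
          intro k hk
          obtain ⟨h1, h2⟩ := hpt_le (i:ℝ) (j:ℝ) n k hij' hk
          obtain ⟨hb1, hb2⟩ := hψbd ω _ (le_trans hi0 h1) h2
          rw [abs_of_nonneg hb1]
          exact hb2
        apply le_trans (Finset.sum_le_sum h1)
        rw [Finset.sum_const, Finset.card_range, nsmul_eq_mul]
        push_cast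
        exact le_rfl
      calc ((j:ℝ)-(i:ℝ))/2^n * |∑ k ∈ Finset.range (2^n),
            (aR ((i:ℝ) + k*(((j:ℝ)-(i:ℝ))/2^n)) ω : ℝ)/(1-((i:ℝ) + k*(((j:ℝ)-(i:ℝ))/2^n)))|
          ≤ ((j:ℝ)-(i:ℝ))/2^n * (2^n * ((n₀:ℝ)/(1-(j:ℝ)))) :=
            mul_le_mul_of_nonneg_left hsum hδ0
        _ = ((j:ℝ)-(i:ℝ)) * ((n₀:ℝ)/(1-(j:ℝ))) := by
            have h2 : (2:ℝ)^n ≠ 0 := by positivity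
            field_simp
    have hLnint : ∀ n : ℕ, Integrable (fun ω =>
        (((j:ℝ)-(i:ℝ))/2^n) * ∑ k ∈ Finset.range (2^n),
          (aR ((i:ℝ) + k*(((j:ℝ)-(i:ℝ))/2^n)) ω : ℝ)/(1-((i:ℝ) + k*(((j:ℝ)-(i:ℝ))/2^n)))) μ :=
      fun n => integrable_of_bdd (hLnmeas n) _ (hLnbd n)
    -- squeeze: ∫_A Ln → ∫_A Xst
    have hT1 : Tendsto (fun n : ℕ => ∫ ω in A, ((((j:ℝ)-(i:ℝ))/2^n) * ∑ k ∈ Finset.range (2^n),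
        (aR ((i:ℝ) + k*(((j:ℝ)-(i:ℝ))/2^n)) ω : ℝ)/(1-((i:ℝ) + k*(((j:ℝ)-(i:ℝ))/2^n)))) ∂μ)
        atTop (𝓝 (∫ ω in A, (∫ u in (i:ℝ)..(j:ℝ), (aR u ω:ℝ)/(1-u)) ∂μ)) := by
      have hbd : ∀ (n : ℕ) (ω : Ω),
          0 ≤ (∫ u in (i:ℝ)..(j:ℝ), (aR u ω:ℝ)/(1-u))
            - (((j:ℝ)-(i:ℝ))/2^n) * ∑ k ∈ Finset.range (2^n),
              (aR ((i:ℝ) + k*(((j:ℝ)-(i:ℝ))/2^n)) ω : ℝ)/(1-((i:ℝ) + k*(((j:ℝ)-(i:ℝ))/2^n)))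
          ∧ (∫ u in (i:ℝ)..(j:ℝ), (aR u ω:ℝ)/(1-u))
            - (((j:ℝ)-(i:ℝ))/2^n) * ∑ k ∈ Finset.range (2^n),
              (aR ((i:ℝ) + k*(((j:ℝ)-(i:ℝ))/2^n)) ω : ℝ)/(1-((i:ℝ) + k*(((j:ℝ)-(i:ℝ))/2^n)))
            ≤ ((n₀:ℝ)/(1-(j:ℝ))) * (((j:ℝ)-(i:ℝ))/2^n) := by
        intro n ω
        obtain ⟨hb1, hb2⟩ := riemann_bound hij' (hψmono ω (i:ℝ) (j:ℝ) hi0 hj1) n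
        refine ⟨by linarith, ?_⟩
        have hgj := (hψbd ω (j:ℝ) hj0 le_rfl).2
        have hgi := (hψbd ω (i:ℝ) hi0 hij').1
        have hδ0 : (0:ℝ) ≤ ((j:ℝ)-(i:ℝ))/2^n := div_nonneg (by linarith) (by positivity)
        have h5 : ((aR (j:ℝ) ω:ℝ)/(1-(j:ℝ)) - (aR (i:ℝ) ω:ℝ)/(1-(i:ℝ))) * (((j:ℝ)-(i:ℝ))/2^n)
            ≤ ((n₀:ℝ)/(1-(j:ℝ))) * (((j:ℝ)-(i:ℝ))/2^n) :=
          mul_le_mul_of_nonneg_right (by linarith) hδ0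
        linarith
      have hup : ∀ n : ℕ, (∫ ω in A, ((((j:ℝ)-(i:ℝ))/2^n) * ∑ k ∈ Finset.range (2^n),
          (aR ((i:ℝ) + k*(((j:ℝ)-(i:ℝ))/2^n)) ω : ℝ)/(1-((i:ℝ) + k*(((j:ℝ)-(i:ℝ))/2^n)))) ∂μ)
          ≤ ∫ ω in A, (∫ u in (i:ℝ)..(j:ℝ), (aR u ω:ℝ)/(1-u)) ∂μ := by
        intro n
        apply setIntegral_mono_on ((hLnint n).integrableOn) (hXstint.integrableOn) hAm
        intro ω _
        linarith [(hbd n ω).1]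
      have hlo : ∀ n : ℕ, (∫ ω in A, (∫ u in (i:ℝ)..(j:ℝ), (aR u ω:ℝ)/(1-u)) ∂μ)
            - ((n₀:ℝ)/(1-(j:ℝ))) * (((j:ℝ)-(i:ℝ))/2^n)
          ≤ ∫ ω in A, ((((j:ℝ)-(i:ℝ))/2^n) * ∑ k ∈ Finset.range (2^n),
            (aR ((i:ℝ) + k*(((j:ℝ)-(i:ℝ))/2^n)) ω : ℝ)/(1-((i:ℝ) + k*(((j:ℝ)-(i:ℝ))/2^n)))) ∂μ := by
        intro n
        have h6 : (∫ ω in A, ((∫ u in (i:ℝ)..(j:ℝ), (aR u ω:ℝ)/(1-u))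
            - (((j:ℝ)-(i:ℝ))/2^n) * ∑ k ∈ Finset.range (2^n),
              (aR ((i:ℝ) + k*(((j:ℝ)-(i:ℝ))/2^n)) ω : ℝ)/(1-((i:ℝ) + k*(((j:ℝ)-(i:ℝ))/2^n)))) ∂μ)
            ≤ ((n₀:ℝ)/(1-(j:ℝ))) * (((j:ℝ)-(i:ℝ))/2^n) := by
          have h7 := setIntegral_mono_on (hXstint.integrableOn.sub (hLnint n).integrableOn)
            (integrableOn_const (measure_ne_top μ A)) hAm
            (fun ω _ => (hbd n ω).2)
          rw [setIntegral_const, smul_eq_mul] at h7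
          have hC0 : 0 ≤ ((n₀:ℝ)/(1-(j:ℝ))) * (((j:ℝ)-(i:ℝ))/2^n) :=
            mul_nonneg (div_nonneg (Nat.cast_nonneg _) ht1.le)
              (div_nonneg (by linarith) (by positivity))
          calc (∫ ω in A, ((∫ u in (i:ℝ)..(j:ℝ), (aR u ω:ℝ)/(1-u))
                - (((j:ℝ)-(i:ℝ))/2^n) * ∑ k ∈ Finset.range (2^n),
                  (aR ((i:ℝ) + k*(((j:ℝ)-(i:ℝ))/2^n)) ω : ℝ)/(1-((i:ℝ) + k*(((j:ℝ)-(i:ℝ))/2^n)))) ∂μ)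
              ≤ (μ A).toReal * (((n₀:ℝ)/(1-(j:ℝ))) * (((j:ℝ)-(i:ℝ))/2^n)) := h7
            _ ≤ 1 * (((n₀:ℝ)/(1-(j:ℝ))) * (((j:ℝ)-(i:ℝ))/2^n)) :=
                mul_le_mul_of_nonneg_right hμA hC0
            _ = ((n₀:ℝ)/(1-(j:ℝ))) * (((j:ℝ)-(i:ℝ))/2^n) := by ring
        rw [integral_sub (hXstint.integrableOn) ((hLnint n).integrableOn)] at h6
        linarith
      have hC : Tendsto (fun n : ℕ => (∫ ω in A, (∫ u in (i:ℝ)..(j:ℝ), (aR u ω:ℝ)/(1-u)) ∂μ)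
          - ((n₀:ℝ)/(1-(j:ℝ))) * (((j:ℝ)-(i:ℝ))/2^n)) atTop
          (𝓝 (∫ ω in A, (∫ u in (i:ℝ)..(j:ℝ), (aR u ω:ℝ)/(1-u)) ∂μ)) := by
        have h8 : Tendsto (fun n : ℕ => ((n₀:ℝ)/(1-(j:ℝ))) * (((j:ℝ)-(i:ℝ))/2^n)) atTop (𝓝 0) := by
          have h10 := tendsto_pow_atTop_nhds_zero_of_lt_one (r := (1/2:ℝ)) (by norm_num) (by norm_num)
          have h11 := h10.const_mul (((n₀:ℝ)/(1-(j:ℝ))) * ((j:ℝ)-(i:ℝ)))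
          rw [mul_zero] at h11
          exact h11.congr (fun n => by rw [div_pow, one_pow]; ring)
        have h12 : Tendsto (fun _ : ℕ => (∫ ω in A,
            (∫ u in (i:ℝ)..(j:ℝ), (aR u ω:ℝ)/(1-u)) ∂μ)) atTop
            (𝓝 (∫ ω in A, (∫ u in (i:ℝ)..(j:ℝ), (aR u ω:ℝ)/(1-u)) ∂μ)) := tendsto_const_nhds
        have h13 := h12.sub h8
        rw [sub_zero] at h13
        exact h13
      exact tendsto_of_tendsto_of_tendsto_of_le_of_le hC tendsto_const_nhds hlo hup
    -- explicit formula for ∫_A Ln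
    have hT2 : ∀ n : ℕ, (∫ ω in A, ((((j:ℝ)-(i:ℝ))/2^n) * ∑ k ∈ Finset.range (2^n),
        (aR ((i:ℝ) + k*(((j:ℝ)-(i:ℝ))/2^n)) ω : ℝ)/(1-((i:ℝ) + k*(((j:ℝ)-(i:ℝ))/2^n)))) ∂μ)
        = (α + β) * ((((j:ℝ)-(i:ℝ))/2^n) * ∑ k ∈ Finset.range (2^n),
            (1-((i:ℝ) + k*(((j:ℝ)-(i:ℝ))/2^n)))⁻¹)
          - ((j:ℝ)-(i:ℝ)) * β / (1-(i:ℝ)) := by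
      intro n
      have htermint : ∀ k ∈ Finset.range (2^n), IntegrableOn (fun ω =>
          (aR ((i:ℝ) + k*(((j:ℝ)-(i:ℝ))/2^n)) ω : ℝ)
            /(1-((i:ℝ) + k*(((j:ℝ)-(i:ℝ))/2^n)))) A μ := by
        intro k hk
        obtain ⟨h1, h2⟩ := hpt_le (i:ℝ) (j:ℝ) n k hij' hk
        apply Integrable.integrableOn
        apply integrable_of_bdd ((hmeas0 _ (le_trans hi0 h1)
          (lt_of_le_of_lt h2 hj1)).div_const _) ((n₀:ℝ)/(1-(j:ℝ)))
        intro ω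
        obtain ⟨hb1, hb2⟩ := hψbd ω _ (le_trans hi0 h1) h2
        rw [abs_of_nonneg hb1]
        exact hb2
      rw [integral_const_mul]
      rw [integral_finset_sum _ htermint]
      have hterm : ∀ k ∈ Finset.range (2^n),
          (∫ ω in A, (aR ((i:ℝ) + k*(((j:ℝ)-(i:ℝ))/2^n)) ω : ℝ)
            /(1-((i:ℝ) + k*(((j:ℝ)-(i:ℝ))/2^n))) ∂μ)
          = (α + β) * (1-((i:ℝ) + k*(((j:ℝ)-(i:ℝ))/2^n)))⁻¹ - β/(1-(i:ℝ)) := by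
        intro k hk
        obtain ⟨h1, h2⟩ := hpt_le (i:ℝ) (j:ℝ) n k hij' hk
        rw [integral_div, hEr _ h1 h2]
        set u : ℝ := (i:ℝ) + k*(((j:ℝ)-(i:ℝ))/2^n) with hu
        have hu1 : (0:ℝ) < 1 - u := by
          have := lt_of_le_of_lt h2 hj1
          linarith
        have hu1' : 1 - u ≠ 0 := ne_of_gt hu1
        have hs1' : 1 - (i:ℝ) ≠ 0 := ne_of_gt hs1
        field_simp
        ring
      rw [Finset.sum_congr rfl hterm, Finset.sum_sub_distrib, Finset.sum_const,
        Finset.card_range, ← Finset.mul_sum, nsmul_eq_mul]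
      have hs1' : 1 - (i:ℝ) ≠ 0 := ne_of_gt hs1
      have h2n' : (2:ℝ)^n ≠ 0 := by positivity
      push_cast
      field_simp
    -- limit of the explicit formula
    have hRmono : MonotoneOn (fun u : ℝ => (1-u)⁻¹) (Set.Icc (i:ℝ) (j:ℝ)) := by
      intro u hu v hv huv
      simp only
      have h1 : (0:ℝ) < 1 - v := by linarith [hv.2]
      exact inv_anti₀ h1 (by linarith)
    have hT3 : Tendsto (fun n : ℕ => (α + β) * ((((j:ℝ)-(i:ℝ))/2^n) * ∑ k ∈ Finset.range (2^n),
          (1-((i:ℝ) + k*(((j:ℝ)-(i:ℝ))/2^n)))⁻¹) - ((j:ℝ)-(i:ℝ)) * β / (1-(i:ℝ))) atTop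
        (𝓝 ((α + β) * J1 - ((j:ℝ)-(i:ℝ)) * β / (1-(i:ℝ)))) := by
      have h1 := riemann_tendsto hij' hRmono
      exact ((h1.const_mul (α + β)).sub tendsto_const_nhds)
    -- identify the limit
    have hXA : (∫ ω in A, (∫ u in (i:ℝ)..(j:ℝ), (aR u ω:ℝ)/(1-u)) ∂μ)
        = (α + β) * J1 - ((j:ℝ)-(i:ℝ)) * β / (1-(i:ℝ)) := by
      apply tendsto_nhds_unique hT1
      have : (fun n : ℕ => ∫ ω in A, ((((j:ℝ)-(i:ℝ))/2^n) * ∑ k ∈ Finset.range (2^n),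
          (aR ((i:ℝ) + k*(((j:ℝ)-(i:ℝ))/2^n)) ω : ℝ)/(1-((i:ℝ) + k*(((j:ℝ)-(i:ℝ))/2^n)))) ∂μ)
          = fun n : ℕ => (α + β) * ((((j:ℝ)-(i:ℝ))/2^n) * ∑ k ∈ Finset.range (2^n),
            (1-((i:ℝ) + k*(((j:ℝ)-(i:ℝ))/2^n)))⁻¹) - ((j:ℝ)-(i:ℝ)) * β / (1-(i:ℝ)) :=
        funext hT2
      rw [this]
      exact hT3
    -- value of the middle compensator integral over A
    have hS : (∫ ω in A, (∫ u in (i:ℝ)..(j:ℝ), ((n₀:ℝ) - aR u ω)/(1-u)) ∂μ)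
        = β * (((j:ℝ)-(i:ℝ))/(1-(i:ℝ))) := by
      have h1 : (fun ω => ∫ u in (i:ℝ)..(j:ℝ), ((n₀:ℝ) - aR u ω)/(1-u))
          = fun ω => (n₀:ℝ) * J1 - ∫ u in (i:ℝ)..(j:ℝ), (aR u ω:ℝ)/(1-u) := funext hJc
      rw [h1, integral_sub (integrableOn_const (C := (n₀:ℝ) * J1) (measure_ne_top μ A) enorm_ne_top)
        (hXstint.integrableOn), setIntegral_const, smul_eq_mul, hXA, hab]
      rw [Measure.real]
      field_simp
      ring
    -- final assembly
    have hIj : ∫ ω in A, ((aR ((j:ℝ)) ω : ℝ)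
          - ∫ u in (0:ℝ)..((j:ℝ)), ((n₀:ℝ) - aR u ω)/(1-u)) ∂μ
        = (α + β * (((j:ℝ)-(i:ℝ))/(1-(i:ℝ))))
          - ((∫ ω in A, (∫ u in (0:ℝ)..((i:ℝ)), ((n₀:ℝ) - aR u ω)/(1-u)) ∂μ)
            + β * (((j:ℝ)-(i:ℝ))/(1-(i:ℝ)))) := by
      rw [integral_sub ((haRint j).integrableOn) ((hIntint j).integrableOn)]
      rw [hEr (j:ℝ) hij' le_rfl]
      congr 1
      have h2 : (fun ω => ∫ u in (0:ℝ)..((j:ℝ)), ((n₀:ℝ) - aR u ω)/(1-u))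
          = fun ω => (∫ u in (0:ℝ)..((i:ℝ)), ((n₀:ℝ) - aR u ω)/(1-u))
            + ∫ u in (i:ℝ)..(j:ℝ), ((n₀:ℝ) - aR u ω)/(1-u) := by
        funext ω
        have := hFst_eq ω
        linarith
      rw [h2, integral_add ((hIntint i).integrableOn) (hFstint.integrableOn), hS]
    have hIi : ∫ ω in A, ((aR ((i:ℝ)) ω : ℝ)
          - ∫ u in (0:ℝ)..((i:ℝ)), ((n₀:ℝ) - aR u ω)/(1-u)) ∂μ
        = α - ∫ ω in A, (∫ u in (0:ℝ)..((i:ℝ)), ((n₀:ℝ) - aR u ω)/(1-u)) ∂μ := by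
      rw [integral_sub ((haRint i).integrableOn) ((hIntint i).integrableOn), hα]
    show (∫ ω in A, ((aR ((i:ℝ)) ω : ℝ)
          - ∫ u in (0:ℝ)..((i:ℝ)), ((n₀:ℝ) - aR u ω)/(1-u)) ∂μ)
        = ∫ ω in A, ((aR ((j:ℝ)) ω : ℝ)
          - ∫ u in (0:ℝ)..((j:ℝ)), ((n₀:ℝ) - aR u ω)/(1-u)) ∂μ
    rw [hIi, hIj]
    ring
  · exact StronglyMeasurable.aestronglyMeasurable (hadp i)
end

section
/- Let F̂_n be the empirical measure of n i.i.d. samples from F restricted to the nested sets Ω_t, and suppose g(t) = π₀F₀(Ω_t)/F(Ω_t) is continuous and strictly increasing with g(τ) = q. If τ_n^± solve π₀F₀(Ω_t) = qF(Ω_t) ± ε_n with ε_n → 0, then τ_n^+ → τ and τ_n^− → τ; consequently the empirical stopping index τ_n^{ABH}, which satisfies τ_n^− < τ_n^{ABH} < τ_n^+, converges in probability to τ. -/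
open MeasureTheory Set Filter


open MeasureTheory Set Filter in
private lemma aux_conv_seq (g : ℝ → ℝ) (hgmono : StrictMonoOn g (Set.Icc 0 1))
    (τ : ℝ) (hτmem : τ ∈ Set.Icc (0:ℝ) 1)
    (x : ℕ → ℝ) (hxmem : ∀ n, x n ∈ Set.Icc (0:ℝ) 1)
    (hgx : Tendsto (fun n => g (x n)) atTop (nhds (g τ))) :
    Tendsto x atTop (nhds τ) := by
  rw [tendsto_order]
  constructor
  · intro a ha
    rcases lt_or_ge a 0 with h0 | h0
    · exact Eventually.of_forall fun n => lt_of_lt_of_le h0 (hxmem n).1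
    · have hamem : a ∈ Set.Icc (0:ℝ) 1 := ⟨h0, le_trans ha.le hτmem.2⟩
      have hga : g a < g τ := hgmono hamem hτmem ha
      filter_upwards [hgx.eventually (lt_mem_nhds hga)] with n hn
      by_contra hcon
      push_neg at hcon
      exact absurd (hgmono.monotoneOn (hxmem n) hamem hcon) (not_le.mpr hn)
  · intro a ha
    rcases le_or_gt a 1 with h1 | h1
    · have hamem : a ∈ Set.Icc (0:ℝ) 1 := ⟨le_trans hτmem.1 ha.le, h1⟩
      have hga : g τ < g a := hgmono hτmem hamem ha
      filter_upwards [hgx.eventually (gt_mem_nhds hga)] with n hn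
      by_contra hcon
      push_neg at hcon
      exact absurd (hgmono.monotoneOn hamem (hxmem n) hcon) (not_le.mpr hn)
    · exact Eventually.of_forall fun n => lt_of_le_of_lt (hxmem n).2 h1

/-- Convergence of the empirical stopping index. Suppose
`g(t) = π₀ F₀(Ω_t) / F(Ω_t)` is continuous and strictly increasing on `[0,1]` with
`g(τ) = q`. If `τ_n^±` solve `π₀ F₀(Ω_t) = q F(Ω_t) ± ε_n` with `ε_n → 0`, then
`τ_n^± → τ`; consequently the empirical stopping index `τ_n^{ABH}`, which lies in
`(τ_n^−, τ_n^+)` with probability tending to one, converges in probability to `τ`. -/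
theorem empirical_stopping_index_converges
    {X : Type*} [MeasurableSpace X]
    {Ω' : Type*} [MeasurableSpace Ω'] (μ : Measure Ω') [IsProbabilityMeasure μ]
    (F₀ F : Measure X) [IsProbabilityMeasure F₀] [IsProbabilityMeasure F]
    (Ωt : ℝ → Set X) (hnested : ∀ s t : ℝ, s ≤ t → Ωt s ⊆ Ωt t)
    (π₀ q : ℝ) (hπ₀ : π₀ ∈ Set.Ioo (0:ℝ) 1) (hq : q ∈ Set.Ioo (0:ℝ) 1)
    (hFpos : ∀ t ∈ Set.Icc (0:ℝ) 1, 0 < (F (Ωt t)).toReal)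
    (g : ℝ → ℝ)
    (hg : ∀ t, g t = π₀ * (F₀ (Ωt t)).toReal / (F (Ωt t)).toReal)
    (hgcont : ContinuousOn g (Set.Icc 0 1))
    (hgmono : StrictMonoOn g (Set.Icc 0 1))
    (τ : ℝ) (hτmem : τ ∈ Set.Icc (0:ℝ) 1) (hgτ : g τ = q)
    (ε : ℕ → ℝ) (hεnonneg : ∀ n, 0 ≤ ε n) (hε : Tendsto ε atTop (nhds 0))
    (τp τm : ℕ → ℝ)
    (hτpmem : ∀ n, τp n ∈ Set.Icc (0:ℝ) 1) (hτmmem : ∀ n, τm n ∈ Set.Icc (0:ℝ) 1)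
    (hτp : ∀ n, π₀ * (F₀ (Ωt (τp n))).toReal = q * (F (Ωt (τp n))).toReal + ε n)
    (hτm : ∀ n, π₀ * (F₀ (Ωt (τm n))).toReal = q * (F (Ωt (τm n))).toReal - ε n)
    (T : ℕ → Ω' → ℝ)
    (hbetween : Tendsto
      (fun n => μ {ω | ¬ (τm n < T n ω ∧ T n ω < τp n)}) atTop (nhds 0)) :
    Tendsto τp atTop (nhds τ) ∧ Tendsto τm atTop (nhds τ)
      ∧ TendstoInMeasure μ T atTop (fun _ => τ) := by
  -- lower bound on F(Ωt t) for t ∈ [0,1]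
  have hmem0 : (0:ℝ) ∈ Set.Icc (0:ℝ) 1 := ⟨le_refl 0, zero_le_one⟩
  set c : ℝ := (F (Ωt 0)).toReal with hc
  have hcpos : 0 < c := hFpos 0 hmem0
  have hFlb : ∀ t ∈ Set.Icc (0:ℝ) 1, c ≤ (F (Ωt t)).toReal := by
    intro t ht
    exact ENNReal.toReal_le_toReal (measure_ne_top F _) (measure_ne_top F _) |>.mpr
      (measure_mono (hnested 0 t ht.1))
  -- g(x n) in terms of ε
  have key : ∀ (x : ℕ → ℝ), (∀ n, x n ∈ Set.Icc (0:ℝ) 1) →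
      ∀ n, g (x n) = q + (π₀ * (F₀ (Ωt (x n))).toReal - q * (F (Ωt (x n))).toReal)
        / (F (Ωt (x n))).toReal := by
    intro x hx n
    have hFx : (F (Ωt (x n))).toReal ≠ 0 := (hFpos _ (hx n)).ne'
    rw [hg]
    field_simp
    ring
  have hgp : Tendsto (fun n => g (τp n)) atTop (nhds (g τ)) := by
    rw [hgτ]
    have heq : ∀ n, g (τp n) = q + ε n / (F (Ωt (τp n))).toReal := by
      intro n; rw [key τp hτpmem n, hτp n]; ring_nf
    have h0 : Tendsto (fun n => ε n / (F (Ωt (τp n))).toReal) atTop (nhds 0) := by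
      apply squeeze_zero (fun n => div_nonneg (hεnonneg n) (hFpos _ (hτpmem n)).le)
        (fun n => div_le_div_of_nonneg_left (hεnonneg n) hcpos (hFlb _ (hτpmem n)))
      simpa using hε.div_const c
    have := h0.const_add q
    simp only [add_zero] at this
    exact this.congr fun n => (heq n).symm
  have hgm : Tendsto (fun n => g (τm n)) atTop (nhds (g τ)) := by
    rw [hgτ]
    have heq : ∀ n, g (τm n) = q - ε n / (F (Ωt (τm n))).toReal := by
      intro n
      rw [key τm hτmmem n, hτm n]
      have hFx : (F (Ωt (τm n))).toReal ≠ 0 := (hFpos _ (hτmmem n)).ne'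
      field_simp
      ring
    have h0 : Tendsto (fun n => ε n / (F (Ωt (τm n))).toReal) atTop (nhds 0) := by
      apply squeeze_zero (fun n => div_nonneg (hεnonneg n) (hFpos _ (hτmmem n)).le)
        (fun n => div_le_div_of_nonneg_left (hεnonneg n) hcpos (hFlb _ (hτmmem n)))
      simpa using hε.div_const c
    have h1 : Tendsto (fun n => q - ε n / (F (Ωt (τm n))).toReal) atTop (nhds (q - 0)) :=
      Tendsto.sub tendsto_const_nhds h0
    simp only [sub_zero] at h1
    exact h1.congr fun n => (heq n).symm
  have hτpconv : Tendsto τp atTop (nhds τ) := aux_conv_seq g hgmono τ hτmem τp hτpmem hgp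
  have hτmconv : Tendsto τm atTop (nhds τ) := aux_conv_seq g hgmono τ hτmem τm hτmmem hgm
  refine ⟨hτpconv, hτmconv, ?_⟩
  rw [tendstoInMeasure_iff_dist]
  intro δ hδ
  have hp : ∀ᶠ n in atTop, τp n < τ + δ := hτpconv.eventually (gt_mem_nhds (by linarith))
  have hm : ∀ᶠ n in atTop, τm n > τ - δ := hτmconv.eventually (lt_mem_nhds (by linarith))
  refine tendsto_of_tendsto_of_tendsto_of_le_of_le' tendsto_const_nhds hbetween
    (Eventually.of_forall fun n => zero_le) ?_
  filter_upwards [hp, hm] with n h1 h2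
  apply measure_mono
  intro ω hω
  simp only [Set.mem_setOf_eq] at hω ⊢
  intro hcon
  obtain ⟨hl, hr⟩ := hcon
  rw [Real.dist_eq] at hω
  have : |T n ω - τ| < δ := abs_lt.mpr ⟨by linarith, by linarith⟩
  linarith
end
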